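/- arXiv:2201.06155 — 3 statements merged into one kernel-verified Lean document; each statement's English description precedes it below -/
import Mathlib

section
/- (Manià's example: occurrence of the Lavrentiev gap at y for the initial-datum problem.) Let F(z) = ∫_0^1 (z(s)³ − s)²·(z'(s))⁶ ds. There exists η > 0 such that F(z) ≥ η for every Lipschitz function z : [0,1] → ℝ with z(0) = 0 and z(1) ∈ [3/4, 3/2]. Consequently, for y(s) = s^{1/3}, every sequence (y_h) of Lipschitz functions with y_h(0)=0 converging to y in W^{1,1}([0,1]) satisfies liminf_{h→∞} F(y_h) ≥ η > 0 = F(y); i.e. the Lavrentiev gap occurs at y for the problem with the single end point condition z(0)=0. -/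
open MeasureTheory Set Filter ENNReal NNReal

noncomputable section

/-- `z` belongs to `W^{1,1}([0,1];ℝ)` with derivative `z'`. -/
def MemW11 (z z' : ℝ → ℝ) : Prop :=
  IntervalIntegrable z' volume 0 1 ∧
  ∀ x ∈ Set.Icc (0:ℝ) 1, z x = z 0 + ∫ s in (0:ℝ)..x, z' s

/-- The Manià functional `F(z) = ∫_0^1 (z³ − s)² (z')⁶ ds`. -/
def ManiaF (z z' : ℝ → ℝ) : ℝ≥0∞ :=
  ∫⁻ s in Set.Icc (0:ℝ) 1, ENNReal.ofReal ((z s ^ 3 - s) ^ 2 * z' s ^ 6)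

lemma exists_ab (z : ℝ → ℝ) (C : ℝ≥0)
    (hL : LipschitzOnWith C z (Icc 0 1)) (h0 : z 0 = 0) (h1 : 3/4 ≤ z 1) :
    ∃ a b : ℝ, 0 < a ∧ a < b ∧ b ≤ 1 ∧
      (∀ s ∈ Icc a b, (1/4) * s ^ ((1:ℝ)/3) ≤ z s ∧ z s ≤ (1/2) * s ^ ((1:ℝ)/3)) ∧
      z a = (1/4) * a ^ ((1:ℝ)/3) ∧ z b = (1/2) * b ^ ((1:ℝ)/3) := by
  have hz : ContinuousOn z (Icc 0 1) := hL.continuousOn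
  set D : ℝ := (C : ℝ) + 1 with hD
  have hD1 : (1:ℝ) ≤ D := by have := C.coe_nonneg; simp only [hD]; linarith
  set s₁ : ℝ := (4*D) ^ (-(3:ℝ)/2) with hs₁def
  have h4D : (1:ℝ) ≤ 4*D := by linarith
  have hs₁pos : 0 < s₁ := Real.rpow_pos_of_pos (by linarith) _
  have hs₁le : s₁ ≤ 1 := Real.rpow_le_one_of_one_le_of_nonpos h4D (by norm_num)
  set φ : ℝ → ℝ := fun s => s ^ ((1:ℝ)/3) with hφdef
  have hφcont : ContinuousOn φ (Icc 0 1) := by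
    intro x hx
    exact (Real.continuousAt_rpow_const x _ (Or.inr (by norm_num))).continuousWithinAt
  have hφpos : ∀ {s : ℝ}, 0 < s → 0 < φ s := fun hs => Real.rpow_pos_of_pos hs _
  -- z s₁ < (1/4) φ s₁
  have hzs₁ : z s₁ < (1/4) * φ s₁ := by
    have hmem : s₁ ∈ Icc (0:ℝ) 1 := ⟨hs₁pos.le, hs₁le⟩
    have h0mem : (0:ℝ) ∈ Icc (0:ℝ) 1 := ⟨le_rfl, zero_le_one⟩
    have hd := hL.dist_le_mul s₁ hmem 0 h0mem
    rw [h0, Real.dist_eq, Real.dist_eq, sub_zero, sub_zero] at hd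
    have hzle : z s₁ ≤ (C:ℝ) * s₁ := by
      calc z s₁ ≤ |z s₁| := le_abs_self _
      _ ≤ (C:ℝ) * |s₁| := hd
      _ = (C:ℝ) * s₁ := by rw [abs_of_pos hs₁pos]
    have hsplit : s₁ = s₁ ^ ((2:ℝ)/3) * s₁ ^ ((1:ℝ)/3) := by
      rw [← Real.rpow_add hs₁pos]; norm_num
    have h23 : s₁ ^ ((2:ℝ)/3) = (4*D)⁻¹ := by
      rw [hs₁def, ← Real.rpow_mul (by linarith : (0:ℝ) ≤ 4*D)]
      norm_num [Real.rpow_neg_one]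
    have hDs : D * s₁ = (1/4) * φ s₁ := by
      calc D * s₁ = D * (s₁ ^ ((2:ℝ)/3) * s₁ ^ ((1:ℝ)/3)) := by rw [← hsplit]
      _ = D * (4*D)⁻¹ * s₁ ^ ((1:ℝ)/3) := by rw [h23]; ring
      _ = (1/4) * φ s₁ := by
          rw [hφdef]
          have : D * (4*D)⁻¹ = 1/4 := by
            field_simp
          rw [this]
    have : (C:ℝ) * s₁ < D * s₁ := by
      have : (C:ℝ) < D := by rw [hD]; linarith
      exact mul_lt_mul_of_pos_right this hs₁pos
    linarith
  -- the function g = z - (1/2)φ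
  set g : ℝ → ℝ := fun s => z s - (1/2) * φ s with hgdef
  have hgcont : ContinuousOn g (Icc 0 1) := hz.sub (continuousOn_const.mul hφcont)
  have hsub1 : Icc s₁ 1 ⊆ Icc (0:ℝ) 1 := Icc_subset_Icc hs₁pos.le le_rfl
  set Sb : Set ℝ := Icc s₁ 1 ∩ g ⁻¹' (Ici 0) with hSbdef
  have hSbclosed : IsClosed Sb :=
    (hgcont.mono hsub1).preimage_isClosed_of_isClosed isClosed_Icc isClosed_Ici
  have h1Sb : (1:ℝ) ∈ Sb := by
    constructor
    · exact ⟨hs₁le, le_rfl⟩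
    · simp only [mem_preimage, mem_Ici, hgdef]
      have : φ 1 = 1 := Real.one_rpow _
      simp only [this]; linarith
  set b : ℝ := sInf Sb with hbdef
  have hbmem : b ∈ Sb := hSbclosed.csInf_mem ⟨1, h1Sb⟩ (bddBelow_Icc.mono inter_subset_left)
  have hb01 : b ∈ Icc (0:ℝ) 1 := hsub1 hbmem.1
  have hgb0 : 0 ≤ g b := hbmem.2
  have hblt : ∀ s ∈ Ico s₁ b, g s < 0 := by
    intro s hs
    by_contra hcon
    push_neg at hcon
    have : s ∈ Sb := ⟨⟨hs.1, le_trans hs.2.le hbmem.1.2⟩, hcon⟩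
    exact absurd (csInf_le (bddBelow_Icc.mono inter_subset_left) this) (not_le.2 hs.2)
  have hgs₁ : g s₁ < 0 := by
    have : (1/4) * φ s₁ ≤ (1/2) * φ s₁ := by
      have := (Real.rpow_pos_of_pos hs₁pos ((1:ℝ)/3)).le
      rw [hφdef]; nlinarith
    rw [hgdef]; simp only; linarith
  have hs₁b : s₁ < b := lt_of_le_of_ne hbmem.1.1 (fun h => by rw [← h] at hgb0; linarith)
  -- g b ≤ 0 via left limit
  have hgble : g b ≤ 0 := by
    have hne : (nhdsWithin b (Ico s₁ b)).NeBot := by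
      rw [← mem_closure_iff_nhdsWithin_neBot, closure_Ico hs₁b.ne]
      exact right_mem_Icc.2 hs₁b.le
    have hsub2 : Ico s₁ b ⊆ Icc (0:ℝ) 1 :=
      fun s hs => ⟨le_trans hs₁pos.le hs.1, le_trans hs.2.le hb01.2⟩
    have htd : Tendsto g (nhdsWithin b (Ico s₁ b)) (nhds (g b)) :=
      (hgcont b hb01).mono hsub2
    exact le_of_tendsto htd (Filter.eventually_of_mem self_mem_nhdsWithin
      (fun s hs => (hblt s hs).le))
  have hgb : g b = 0 := le_antisymm hgble hgb0
  have hzb : z b = (1/2) * φ b := by rw [hgdef] at hgb; simp only at hgb; linarith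
  -- the function f = z - (1/4)φ
  set f : ℝ → ℝ := fun s => z s - (1/4) * φ s with hfdef
  have hfcont : ContinuousOn f (Icc 0 1) := hz.sub (continuousOn_const.mul hφcont)
  have hsubb : Icc s₁ b ⊆ Icc (0:ℝ) 1 := Icc_subset_Icc hs₁pos.le hb01.2
  set Sa : Set ℝ := Icc s₁ b ∩ f ⁻¹' (Iic 0) with hSadef
  have hSaclosed : IsClosed Sa :=
    (hfcont.mono hsubb).preimage_isClosed_of_isClosed isClosed_Icc isClosed_Iic
  have hs₁Sa : s₁ ∈ Sa := by
    refine ⟨⟨le_rfl, hs₁b.le⟩, ?_⟩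
    simp only [mem_preimage, mem_Iic, hfdef]
    linarith
  set a : ℝ := sSup Sa with hadef
  have hamem : a ∈ Sa := hSaclosed.csSup_mem ⟨s₁, hs₁Sa⟩ (bddAbove_Icc.mono inter_subset_left)
  have hfa0 : f a ≤ 0 := hamem.2
  have hfb : 0 < f b := by
    have hbpos : 0 < b := lt_trans hs₁pos hs₁b
    have := hφpos hbpos
    rw [hfdef]; simp only [hzb]; linarith
  have hab : a < b := lt_of_le_of_ne hamem.1.2 (fun h => by rw [h] at hfa0; linarith)
  have halt : ∀ s ∈ Ioc a b, 0 < f s := by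
    intro s hs
    by_contra hcon
    push_neg at hcon
    have : s ∈ Sa := ⟨⟨le_trans hamem.1.1 hs.1.le, hs.2⟩, hcon⟩
    exact absurd (le_csSup (bddAbove_Icc.mono inter_subset_left) this) (not_le.2 hs.1)
  have hfage : 0 ≤ f a := by
    have hne : (nhdsWithin a (Ioc a b)).NeBot := by
      rw [← mem_closure_iff_nhdsWithin_neBot, closure_Ioc hab.ne]
      exact left_mem_Icc.2 hab.le
    have ha01 : a ∈ Icc (0:ℝ) 1 := hsubb hamem.1
    have hsub3 : Ioc a b ⊆ Icc (0:ℝ) 1 :=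
      fun s hs => ⟨le_trans ha01.1 hs.1.le, le_trans hs.2 hb01.2⟩
    have htd : Tendsto f (nhdsWithin a (Ioc a b)) (nhds (f a)) :=
      (hfcont a ha01).mono hsub3
    exact ge_of_tendsto htd (Filter.eventually_of_mem self_mem_nhdsWithin
      (fun s hs => (halt s hs).le))
  have hfa : f a = 0 := le_antisymm hfa0 hfage
  have hza : z a = (1/4) * φ a := by rw [hfdef] at hfa; simp only at hfa; linarith
  refine ⟨a, b, lt_of_lt_of_le hs₁pos hamem.1.1, hab, hb01.2, ?_, hza, hzb⟩
  intro s hs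
  constructor
  · rcases eq_or_lt_of_le hs.1 with h | h
    · rw [← h, hza]
    · have := halt s ⟨h, hs.2⟩
      rw [hfdef] at this; simp only at this; linarith
  · rcases eq_or_lt_of_le hs.2 with h | h
    · rw [h, hzb]
    · have := hblt s ⟨le_trans hamem.1.1 hs.1, h⟩
      rw [hgdef] at this; simp only at this; linarith

lemma cube_rpow {s : ℝ} (hs : 0 ≤ s) : (s ^ ((1:ℝ)/3)) ^ 3 = s := by
  rw [← Real.rpow_natCast (s ^ ((1:ℝ)/3)) 3, ← Real.rpow_mul hs]
  norm_num

lemma key_estimate (z z' : ℝ → ℝ) (hW : MemW11 z z') {a b : ℝ}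
    (ha : 0 < a) (hab : a < b) (hb1 : b ≤ 1)
    (hbd : ∀ s ∈ Icc a b, (1/4) * s ^ ((1:ℝ)/3) ≤ z s ∧ z s ≤ (1/2) * s ^ ((1:ℝ)/3))
    (hza : z a = (1/4) * a ^ ((1:ℝ)/3)) (hzb : z b = (1/2) * b ^ ((1:ℝ)/3)) :
    ENNReal.ofReal ((49/64) * ((3/5)^5/4096)) ≤ ManiaF z z' := by
  have hb : 0 < b := ha.trans hab
  have hφb : 0 < b ^ ((1:ℝ)/3) := Real.rpow_pos_of_pos hb _
  have ha1 : a ≤ 1 := le_trans hab.le hb1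
  have hI0a : IntervalIntegrable z' volume 0 a := hW.1.mono_set
    (by rw [uIcc_of_le ha.le, uIcc_of_le zero_le_one]; exact Icc_subset_Icc le_rfl ha1)
  have hIab : IntervalIntegrable z' volume a b := hW.1.mono_set
    (by rw [uIcc_of_le hab.le, uIcc_of_le zero_le_one]; exact Icc_subset_Icc ha.le hb1)
  have hstepB : z b - z a = ∫ s in a..b, z' s := by
    have h1 := hW.2 a ⟨ha.le, ha1⟩
    have h2 := hW.2 b ⟨hb.le, hb1⟩
    have h3 := intervalIntegral.integral_add_adjacent_intervals hI0a hIab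
    rw [h1, h2]; linarith
  have hstepA : (1/4) * b ^ ((1:ℝ)/3) ≤ z b - z a := by
    have hφab : a ^ ((1:ℝ)/3) ≤ b ^ ((1:ℝ)/3) :=
      Real.rpow_le_rpow ha.le hab.le (by norm_num)
    rw [hza, hzb]; linarith
  -- Hölder
  set ν := volume.restrict (Ioc a b) with hνdef
  have haeIoc : ∀ᵐ s ∂ν, s ∈ Ioc a b :=
    (ae_restrict_iff' measurableSet_Ioc).2 (ae_of_all _ fun s hs => hs)
  have hz'meas : AEMeasurable z' ν := hIab.1.aemeasurable
  set f1 : ℝ → ℝ≥0∞ := fun s => ENNReal.ofReal (s ^ ((1:ℝ)/3) * |z' s|) with hf1def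
  set g1 : ℝ → ℝ≥0∞ := fun s => ENNReal.ofReal (s ^ (-(1:ℝ)/3)) with hg1def
  have hf1meas : AEMeasurable f1 ν :=
    ENNReal.measurable_ofReal.comp_aemeasurable
      (((measurable_id.pow_const ((1:ℝ)/3)).aemeasurable).mul (continuous_abs.measurable.comp_aemeasurable hz'meas))
  have hg1meas : AEMeasurable g1 ν :=
    (ENNReal.measurable_ofReal.comp (measurable_id.pow_const (-(1:ℝ)/3))).aemeasurable
  have hpq : Real.HolderConjugate 6 (6/5) := ⟨by norm_num, by norm_num, by norm_num⟩
  have holder := ENNReal.lintegral_mul_le_Lp_mul_Lq ν hpq hf1meas hg1meas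
  set G : ℝ≥0∞ := ∫⁻ s in Ioc a b, ENNReal.ofReal (s^2 * z' s^6) with hGdef
  -- a.e. identifications
  have e1 : ∫⁻ s, (f1 * g1) s ∂ν = ∫⁻ s, ENNReal.ofReal |z' s| ∂ν := by
    refine lintegral_congr_ae (haeIoc.mono fun s hs => ?_)
    have hs0 : 0 < s := ha.trans hs.1
    simp only [Pi.mul_apply, hf1def, hg1def]
    rw [← ENNReal.ofReal_mul (by positivity)]
    congr 1
    have : s ^ ((1:ℝ)/3) * s ^ (-(1:ℝ)/3) = 1 := by
      rw [← Real.rpow_add hs0]; norm_num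
    calc s ^ ((1:ℝ)/3) * |z' s| * s ^ (-(1:ℝ)/3)
        = s ^ ((1:ℝ)/3) * s ^ (-(1:ℝ)/3) * |z' s| := by ring
      _ = |z' s| := by rw [this, one_mul]
  have e2 : ∫⁻ s, f1 s ^ (6:ℝ) ∂ν = G := by
    rw [hGdef, hνdef]
    refine lintegral_congr_ae (haeIoc.mono fun s hs => ?_)
    have hs0 : 0 < s := ha.trans hs.1
    simp only [hf1def]
    rw [ENNReal.ofReal_rpow_of_nonneg (by positivity) (by norm_num)]
    congr 1
    have hA : (s ^ ((1:ℝ)/3)) ^ (6:ℝ) = s ^ 2 := by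
      rw [← Real.rpow_mul hs0.le, ← Real.rpow_natCast s 2]
      norm_num
    have hB : |z' s| ^ (6:ℝ) = z' s ^ 6 := by
      rw [show (6:ℝ) = ((6:ℕ):ℝ) by norm_num, Real.rpow_natCast, ← abs_pow,
        abs_of_nonneg (by positivity)]
    rw [Real.mul_rpow (by positivity) (abs_nonneg _), hA, hB]
  -- compute the q-integral
  have hrpowint : IntervalIntegrable (fun s : ℝ => s ^ (-(2:ℝ)/5)) volume a b := by
    apply intervalIntegral.intervalIntegrable_rpow
    right
    rw [uIcc_of_le hab.le]
    exact fun h => absurd h.1 (not_le.2 ha)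
  have e3 : ∫⁻ s, g1 s ^ ((6:ℝ)/5) ∂ν
      = ENNReal.ofReal (∫ s in Ioc a b, s ^ (-(2:ℝ)/5)) := by
    have step1 : ∫⁻ s, g1 s ^ ((6:ℝ)/5) ∂ν
        = ∫⁻ s, ENNReal.ofReal (s ^ (-(2:ℝ)/5)) ∂ν := by
      refine lintegral_congr_ae (haeIoc.mono fun s hs => ?_)
      have hs0 : 0 < s := ha.trans hs.1
      simp only [hg1def]
      rw [ENNReal.ofReal_rpow_of_nonneg (Real.rpow_nonneg hs0.le _) (by norm_num),
        ← Real.rpow_mul hs0.le]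
      norm_num
    rw [step1, hνdef, ← ofReal_integral_eq_lintegral_ofReal hrpowint.1
      ((ae_restrict_iff' measurableSet_Ioc).2
        (ae_of_all _ fun s hs => Real.rpow_nonneg (ha.trans hs.1).le _))]
  have hBreal : ∫ s in Ioc a b, s ^ (-(2:ℝ)/5) ≤ (5/3) * b ^ ((3:ℝ)/5) := by
    rw [← intervalIntegral.integral_of_le hab.le,
      integral_rpow (Or.inr ⟨by norm_num, by
        rw [uIcc_of_le hab.le]; exact fun h => absurd h.1 (not_le.2 ha)⟩)]
    have haexp : 0 ≤ a ^ ((-(2:ℝ)/5) + 1) := Real.rpow_nonneg ha.le _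
    have : (-(2:ℝ)/5) + 1 = (3:ℝ)/5 := by norm_num
    rw [this]
    linarith
  -- the chain
  set X : ℝ≥0∞ := ENNReal.ofReal ((1/4) * b ^ ((1:ℝ)/3)) with hXdef
  set B' : ℝ≥0∞ := ENNReal.ofReal ((5/3) * b ^ ((3:ℝ)/5)) with hB'def
  rw [show (1:ℝ)/(6/5) = 5/6 by norm_num, e2, e3] at holder
  have hXle : X ≤ G ^ ((1:ℝ)/6) * B' ^ ((5:ℝ)/6) := by
    have l1 : X ≤ ENNReal.ofReal (∫ s in a..b, |z' s|) := by
      apply ENNReal.ofReal_le_ofReal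
      calc (1/4) * b ^ ((1:ℝ)/3) ≤ z b - z a := hstepA
        _ = ∫ s in a..b, z' s := hstepB
        _ ≤ |∫ s in a..b, z' s| := le_abs_self _
        _ ≤ ∫ s in a..b, |z' s| := intervalIntegral.abs_integral_le_integral_abs hab.le
    have l2 : ENNReal.ofReal (∫ s in a..b, |z' s|) = ∫⁻ s, ENNReal.ofReal |z' s| ∂ν := by
      rw [intervalIntegral.integral_of_le hab.le, hνdef]
      exact ofReal_integral_eq_lintegral_ofReal hIab.1.abs
        (ae_of_all _ fun s => abs_nonneg _)
    calc X ≤ ∫⁻ s, ENNReal.ofReal |z' s| ∂ν := l1.trans l2.le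
      _ = ∫⁻ s, (f1 * g1) s ∂ν := e1.symm
      _ ≤ G ^ ((1:ℝ)/6) * (ENNReal.ofReal (∫ s in Ioc a b, s ^ (-(2:ℝ)/5))) ^ ((5:ℝ)/6) :=
          holder
      _ ≤ G ^ ((1:ℝ)/6) * B' ^ ((5:ℝ)/6) :=
          mul_le_mul_right (ENNReal.rpow_le_rpow (ENNReal.ofReal_le_ofReal hBreal)
            (by norm_num)) _
  have hX6 : X ^ (6:ℕ) ≤ G * B' ^ (5:ℕ) := by
    calc X ^ (6:ℕ) ≤ (G ^ ((1:ℝ)/6) * B' ^ ((5:ℝ)/6)) ^ (6:ℕ) :=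

          pow_le_pow_left₀ zero_le hXle 6
      _ = G * B' ^ (5:ℕ) := by
        rw [mul_pow, ← ENNReal.rpow_natCast (G ^ ((1:ℝ)/6)) 6,
          ← ENNReal.rpow_natCast (B' ^ ((5:ℝ)/6)) 6, ← ENNReal.rpow_mul, ← ENNReal.rpow_mul,
          show ((1:ℝ)/6) * (6:ℕ) = 1 by norm_num,
          show ((5:ℝ)/6) * (6:ℕ) = ((5:ℕ):ℝ) by norm_num,
          ENNReal.rpow_one, ENNReal.rpow_natCast]
  have hlhs : ENNReal.ofReal (((3:ℝ)/5)^5/4096) * B' ^ (5:ℕ) ≤ X ^ (6:ℕ) := by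
    rw [hXdef, hB'def, ← ENNReal.ofReal_pow (by positivity),
      ← ENNReal.ofReal_mul (by positivity), ← ENNReal.ofReal_pow (by positivity)]
    apply ENNReal.ofReal_le_ofReal
    have hb35 : (b ^ ((3:ℝ)/5)) ^ (5:ℕ) = b ^ (3:ℕ) := by
      rw [← Real.rpow_natCast (b ^ ((3:ℝ)/5)) 5, ← Real.rpow_mul hb.le,
        ← Real.rpow_natCast b 3]
      norm_num
    have hb13 : (b ^ ((1:ℝ)/3)) ^ (6:ℕ) = b ^ (2:ℕ) := by
      rw [← Real.rpow_natCast (b ^ ((1:ℝ)/3)) 6, ← Real.rpow_mul hb.le,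
        ← Real.rpow_natCast b 2]
      norm_num
    rw [mul_pow, mul_pow, hb35, hb13]
    have hb32 : b ^ (3:ℕ) ≤ b ^ (2:ℕ) := pow_le_pow_of_le_one hb.le hb1 (by norm_num)
    nlinarith [hb32]
  have hB'ne0 : B' ^ (5:ℕ) ≠ 0 :=
    pow_ne_zero _ (by rw [hB'def]; exact (ENNReal.ofReal_pos.2 (by positivity)).ne')
  have hB'netop : B' ^ (5:ℕ) ≠ ⊤ := ENNReal.pow_ne_top ENNReal.ofReal_ne_top
  have hG : ENNReal.ofReal (((3:ℝ)/5)^5/4096) ≤ G :=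
    (ENNReal.mul_le_mul_iff_left hB'ne0 hB'netop).1 (le_trans hlhs hX6)
  -- pointwise weight bound
  have hpoint : ∀ s ∈ Ioc a b,
      ENNReal.ofReal ((49:ℝ)/64 * (s^2 * z' s^6))
        ≤ ENNReal.ofReal ((z s ^ 3 - s) ^ 2 * z' s ^ 6) := by
    intro s hs
    have hs0 : 0 < s := ha.trans hs.1
    obtain ⟨hlo, hhi⟩ := hbd s ⟨hs.1.le, hs.2⟩
    have hu : 0 ≤ s ^ ((1:ℝ)/3) := Real.rpow_nonneg hs0.le _
    have hu3 : (s ^ ((1:ℝ)/3)) ^ 3 = s := cube_rpow hs0.le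
    have hz0 : 0 ≤ z s := le_trans (by positivity) hlo
    have hcube : z s ^ 3 ≤ (1/8) * s := by
      calc z s ^ 3 ≤ ((1/2) * s ^ ((1:ℝ)/3)) ^ 3 := pow_le_pow_left₀ hz0 hhi 3
        _ = (1/8) * s := by rw [mul_pow, hu3]; norm_num
    apply ENNReal.ofReal_le_ofReal
    have hsq : (49:ℝ)/64 * s^2 ≤ (z s ^ 3 - s)^2 := by
      calc (49:ℝ)/64 * s^2 = ((7/8) * s)^2 := by ring
        _ ≤ (s - z s ^ 3)^2 := pow_le_pow_left₀ (by positivity) (by linarith) 2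
        _ = (z s ^ 3 - s)^2 := by ring
    calc (49:ℝ)/64 * (s^2 * z' s^6) = ((49:ℝ)/64 * s^2) * z' s^6 := by ring
      _ ≤ (z s ^ 3 - s)^2 * z' s^6 := mul_le_mul_of_nonneg_right hsq (by positivity)
  calc ENNReal.ofReal ((49/64) * ((3/5)^5/4096))
      = ENNReal.ofReal (49/64) * ENNReal.ofReal (((3:ℝ)/5)^5/4096) := by
        rw [← ENNReal.ofReal_mul (by norm_num)]
    _ ≤ ENNReal.ofReal (49/64) * G := mul_le_mul_right hG _
    _ = ∫⁻ s in Ioc a b, ENNReal.ofReal (49/64) * ENNReal.ofReal (s^2 * z' s^6) := by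
        rw [hGdef, lintegral_const_mul' _ _ ENNReal.ofReal_ne_top]
    _ = ∫⁻ s in Ioc a b, ENNReal.ofReal ((49:ℝ)/64 * (s^2 * z' s^6)) := by
        refine lintegral_congr fun s => ?_
        rw [← ENNReal.ofReal_mul (by norm_num)]
    _ ≤ ∫⁻ s in Ioc a b, ENNReal.ofReal ((z s ^ 3 - s) ^ 2 * z' s ^ 6) :=
        lintegral_mono_ae ((ae_restrict_iff' measurableSet_Ioc).2 (ae_of_all _ hpoint))
    _ ≤ ManiaF z z' :=
        lintegral_mono_set fun s hs => ⟨(ha.trans hs.1).le, hs.2.trans hb1⟩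

lemma endpoint_eventually (yh yh' : ℕ → ℝ → ℝ)
    (hW : ∀ h, MemW11 (yh h) (yh' h)) (h0 : ∀ h, yh h 0 = 0)
    (htd : Tendsto (fun h => ∫ s in Set.Icc (0:ℝ) 1,
      |yh' h s - (1/3) * s ^ (-(2:ℝ)/3)|) atTop (nhds 0)) :
    ∀ᶠ h in atTop, yh h 1 ∈ Set.Icc (3/4:ℝ) (3/2) := by
  have hy'int : IntervalIntegrable (fun s : ℝ => (1/3) * s ^ (-(2:ℝ)/3)) volume 0 1 :=
    (intervalIntegral.intervalIntegrable_rpow' (by norm_num)).const_mul _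
  have hval : ∫ s in (0:ℝ)..1, (1/3) * s ^ (-(2:ℝ)/3) = 1 := by
    rw [intervalIntegral.integral_const_mul, integral_rpow (Or.inl (by norm_num)),
      show -(2:ℝ)/3 + 1 = 1/3 by norm_num, Real.one_rpow,
      Real.zero_rpow (by norm_num)]
    norm_num
  have hkey : ∀ h, |yh h 1 - 1| ≤ ∫ s in Set.Icc (0:ℝ) 1,
      |yh' h s - (1/3) * s ^ (-(2:ℝ)/3)| := by
    intro h
    have e := (hW h).2 1 ⟨zero_le_one, le_rfl⟩
    rw [h0 h, zero_add] at e
    have heq : ∫ s in (0:ℝ)..1, (yh' h s - (1/3) * s ^ (-(2:ℝ)/3)) = yh h 1 - 1 := by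
      rw [intervalIntegral.integral_sub (hW h).1 hy'int, hval, ← e]
    calc |yh h 1 - 1|
        = |∫ s in (0:ℝ)..1, (yh' h s - (1/3) * s ^ (-(2:ℝ)/3))| := by rw [heq]
      _ ≤ ∫ s in (0:ℝ)..1, |yh' h s - (1/3) * s ^ (-(2:ℝ)/3)| :=
          intervalIntegral.abs_integral_le_integral_abs zero_le_one
      _ = ∫ s in Set.Icc (0:ℝ) 1, |yh' h s - (1/3) * s ^ (-(2:ℝ)/3)| := by
          rw [intervalIntegral.integral_of_le zero_le_one, ← integral_Icc_eq_integral_Ioc]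
  have hev := htd.eventually (gt_mem_nhds (show (0:ℝ) < 1/4 by norm_num))
  refine hev.mono fun h hh => ?_
  have := (hkey h).trans_lt hh
  rw [abs_lt] at this
  exact ⟨by linarith [this.1], by linarith [this.2]⟩


/-- **Manià's example: occurrence of the Lavrentiev gap at `y(s)=s^{1/3}` for the
problem with the single initial condition `z(0)=0`.** -/
theorem mania_gap_initial_condition :
    ∃ η : ℝ, 0 < η ∧
      -- `F(z) ≥ η` for every Lipschitz `z` with `z(0)=0` and `z(1) ∈ [3/4, 3/2]`
      (∀ z z' : ℝ → ℝ, MemW11 z z' →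
        (∃ C : ℝ≥0, LipschitzOnWith C z (Set.Icc 0 1)) → z 0 = 0 →
        z 1 ∈ Set.Icc (3/4 : ℝ) (3/2) → ENNReal.ofReal η ≤ ManiaF z z') ∧
      -- consequently the Lavrentiev gap occurs at `y`
      (∀ yh yh' : ℕ → ℝ → ℝ,
        (∀ h, MemW11 (yh h) (yh' h)) →
        (∀ h, ∃ C : ℝ≥0, LipschitzOnWith C (yh h) (Set.Icc 0 1)) →
        (∀ h, yh h 0 = 0) →
        -- `y_h → y` in `W^{1,1}([0,1])`
        Tendsto (fun h => ∫ s in Set.Icc (0:ℝ) 1, |yh h s - s ^ ((1:ℝ)/3)|)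
          atTop (nhds 0) →
        Tendsto (fun h => ∫ s in Set.Icc (0:ℝ) 1,
          |yh' h s - (1/3) * s ^ (-(2:ℝ)/3)|) atTop (nhds 0) →
        ENNReal.ofReal η ≤ Filter.liminf (fun h => ManiaF (yh h) (yh' h)) atTop) ∧
      -- while `F(y) = 0`
      ManiaF (fun s : ℝ => s ^ ((1:ℝ)/3)) (fun s : ℝ => (1/3) * s ^ (-(2:ℝ)/3)) = 0 := by
  have P1 : ∀ z z' : ℝ → ℝ, MemW11 z z' →
      (∃ C : ℝ≥0, LipschitzOnWith C z (Set.Icc 0 1)) → z 0 = 0 →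
      z 1 ∈ Set.Icc (3/4 : ℝ) (3/2) →
      ENNReal.ofReal ((49/64) * ((3/5)^5/4096)) ≤ ManiaF z z' := by
    rintro z z' hW ⟨C, hL⟩ h0 h1
    obtain ⟨a, b, ha, hab, hb1, hbd, hza, hzb⟩ := exists_ab z C hL h0 h1.1
    exact key_estimate z z' hW ha hab hb1 hbd hza hzb
  refine ⟨(49/64) * ((3/5)^5/4096), by norm_num, P1, ?_, ?_⟩
  · intro yh yh' hW hLip h0 _ htd'
    have hev := endpoint_eventually yh yh' hW h0 htd'
    have hev2 : ∀ᶠ h in atTop,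
        ENNReal.ofReal ((49/64) * ((3/5)^5/4096)) ≤ ManiaF (yh h) (yh' h) :=
      hev.mono fun h hh => P1 (yh h) (yh' h) (hW h) (hLip h) (h0 h) hh
    exact le_liminf_of_le (by isBoundedDefault) hev2
  · rw [ManiaF, setLIntegral_congr_fun measurableSet_Icc
      (fun s hs => ?_), lintegral_zero]
    rw [cube_rpow hs.1]
    simp
end
end

section
/- (Example 3.4, Alberti: occurrence of the Lavrentiev phenomenon for an autonomous, convex, lower semicontinuous extended-valued problem with both end point conditions.) Let y ∈ W^{1,1}([0,1];ℝ) be of class C¹ on [0,1), with y(0)=0, y(1)=1, y'(s) > 0 for all s ∈ [0,1), and lim_{s→1⁻} y'(s) = +∞ (for instance y(s) = 1 − √(1−s)). For ζ ∈ [0,1) set q(ζ) := y'(y^{−1}(ζ)). Then for every Lipschitz function z : [0,1] → ℝ with z(0)=0 and z(1)=1, the set { s ∈ [0,1] : z(s) ∈ [0,1) and z'(s) > q(z(s)) } has positive Lebesgue measure. Equivalently, setting Λ(z,v) = 0 if (z ∈ [0,1) and v ≤ q(z)) or z ∉ [0,1), and Λ(z,v) = +∞ otherwise, one has ∫_0^1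 Λ(z(s),z'(s)) ds = +∞ for every Lipschitz z with z(0)=0, z(1)=1, while the functional vanishes at y. -/
open MeasureTheory Set Filter ENNReal NNReal

noncomputable section

open Classical in
/-- The extended-valued autonomous Lagrangian of Example 3.4:
`Λ(z,v) = 0` if (`z ∈ [0,1)` and `v ≤ q(z)`) or `z ∉ [0,1)`, and `+∞` otherwise. -/
def albertiLag (q : ℝ → ℝ) (z v : ℝ) : ℝ≥0∞ :=
  if (z ∈ Set.Ico (0:ℝ) 1 ∧ v ≤ q z) ∨ z ∉ Set.Ico (0:ℝ) 1 then 0 else ⊤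

namespace AlbertiAux

/-- The (clamped) inverse of `y`. -/
def G (y : ℝ → ℝ) (ζ : ℝ) : ℝ := sInf {s ∈ Set.Icc (0:ℝ) 1 | min ζ 1 ≤ y s}

variable {y y' : ℝ → ℝ}

lemma mem_set_one (hy1 : y 1 = 1) (ζ : ℝ) :
    (1:ℝ) ∈ {s ∈ Set.Icc (0:ℝ) 1 | min ζ 1 ≤ y s} :=
  ⟨⟨zero_le_one, le_refl 1⟩, by rw [hy1]; exact min_le_right _ _⟩

lemma G_nonempty (hy1 : y 1 = 1) (ζ : ℝ) :
    {s ∈ Set.Icc (0:ℝ) 1 | min ζ 1 ≤ y s}.Nonempty := ⟨1, mem_set_one hy1 ζ⟩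

lemma G_bddBelow (ζ : ℝ) : BddBelow {s ∈ Set.Icc (0:ℝ) 1 | min ζ 1 ≤ y s} :=
  ⟨0, fun s hs => hs.1.1⟩

lemma G_mem (hy1 : y 1 = 1) (ζ : ℝ) : G y ζ ∈ Set.Icc (0:ℝ) 1 :=
  ⟨le_csInf (G_nonempty hy1 ζ) (fun s hs => hs.1.1),
   csInf_le (G_bddBelow ζ) (mem_set_one hy1 ζ)⟩

lemma G_mono (hy1 : y 1 = 1) : Monotone (G y) := by
  intro ζ ζ' h
  exact csInf_le_csInf (G_bddBelow ζ) (G_nonempty hy1 ζ')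
    (fun s hs => ⟨hs.1, le_trans (min_le_min_right 1 h) hs.2⟩)

lemma G_le {ζ s₀ : ℝ} (h0 : s₀ ∈ Set.Icc (0:ℝ) 1) (h : min ζ 1 ≤ y s₀) : G y ζ ≤ s₀ :=
  csInf_le (G_bddBelow ζ) ⟨h0, h⟩

lemma G_eq_zero (hy0 : y 0 = 0) (hy1 : y 1 = 1) {ζ : ℝ} (h : ζ ≤ 0) : G y ζ = 0 :=
  le_antisymm
    (G_le ⟨le_refl 0, zero_le_one⟩ (by rw [hy0]; exact le_trans (min_le_left _ _) h))
    (G_mem hy1 ζ).1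

lemma G_eq_one (ymono : StrictMonoOn y (Set.Icc 0 1)) (hy1 : y 1 = 1) {ζ : ℝ}
    (h : 1 ≤ ζ) : G y ζ = 1 := by
  refine le_antisymm (G_mem hy1 ζ).2 (le_csInf (G_nonempty hy1 ζ) ?_)
  rintro s ⟨hs, hys⟩
  by_contra hlt
  push_neg at hlt
  have : y s < y 1 := ymono hs ⟨zero_le_one, le_refl 1⟩ hlt
  rw [hy1] at this
  have : min ζ 1 ≤ y s := hys
  rw [min_eq_right h] at this
  linarith

lemma y_G (ycont : ContinuousOn y (Set.Icc 0 1)) (ymono : StrictMonoOn y (Set.Icc 0 1))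
    (hy0 : y 0 = 0) (hy1 : y 1 = 1) {ζ : ℝ} (h0 : 0 ≤ ζ) (h1 : ζ < 1) :
    y (G y ζ) = ζ ∧ G y ζ < 1 := by
  have hmin : min ζ 1 = ζ := min_eq_left h1.le
  obtain ⟨s₀, hs₀, hys₀⟩ := intermediate_value_Icc zero_le_one ycont
    (show ζ ∈ Set.Icc (y 0) (y 1) by rw [hy0, hy1]; exact ⟨h0, h1.le⟩)
  have hs₀1 : s₀ < 1 := by
    rcases lt_or_eq_of_le hs₀.2 with h | h
    · exact h
    · exfalso; rw [h, hy1] at hys₀; linarith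
  have hle : G y ζ ≤ s₀ := G_le hs₀ (by rw [hmin, hys₀])
  have hcl : IsClosed {s ∈ Set.Icc (0:ℝ) 1 | min ζ 1 ≤ y s} := by
    have : {s ∈ Set.Icc (0:ℝ) 1 | min ζ 1 ≤ y s}
        = Set.Icc (0:ℝ) 1 ∩ y ⁻¹' (Set.Ici (min ζ 1)) := rfl
    rw [this]
    exact ycont.preimage_isClosed_of_isClosed isClosed_Icc isClosed_Ici
  have hmem := hcl.csInf_mem (G_nonempty hy1 ζ) (G_bddBelow ζ)
  have hy_le : y (G y ζ) ≤ y s₀ := ymono.monotoneOn hmem.1 hs₀ hle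
  refine ⟨le_antisymm (le_trans hy_le (le_of_eq hys₀)) (le_trans (le_of_eq hmin.symm) hmem.2),
    lt_of_le_of_lt hle hs₀1⟩

lemma G_y (ycont : ContinuousOn y (Set.Icc 0 1)) (ymono : StrictMonoOn y (Set.Icc 0 1))
    (hy0 : y 0 = 0) (hy1 : y 1 = 1) {s : ℝ} (hs : s ∈ Set.Ico (0:ℝ) 1) :
    G y (y s) = s := by
  have hsIcc : s ∈ Set.Icc (0:ℝ) 1 := ⟨hs.1, hs.2.le⟩
  have h0 : 0 ≤ y s := by rw [← hy0]; exact ymono.monotoneOn ⟨le_refl 0, zero_le_one⟩ hsIcc hs.1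
  have h1 : y s < 1 := by rw [← hy1]; exact ymono hsIcc ⟨zero_le_one, le_refl 1⟩ hs.2
  obtain ⟨hyG, _⟩ := y_G ycont ymono hy0 hy1 h0 h1
  exact ymono.injOn (G_mem hy1 (y s)) hsIcc hyG


/-- Continuity-type estimate for `G` at points of `[0,1)`. -/
lemma G_approx (ycont : ContinuousOn y (Set.Icc 0 1)) (ymono : StrictMonoOn y (Set.Icc 0 1))
    (hy0 : y 0 = 0) (hy1 : y 1 = 1) {ζ₀ : ℝ} (h0 : 0 ≤ ζ₀) (h1 : ζ₀ < 1)
    {δ₁ : ℝ} (hδ₁ : 0 < δ₁) :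
    ∃ δ₂ > 0, ∀ ζ, |ζ - ζ₀| ≤ δ₂ → |G y ζ - G y ζ₀| ≤ δ₁ := by
  set s₀ := G y ζ₀ with hs₀def
  obtain ⟨hyG, hs₀1⟩ := y_G ycont ymono hy0 hy1 h0 h1
  have hs₀0 : 0 ≤ s₀ := (G_mem hy1 ζ₀).1
  -- upper part
  set sp : ℝ := min (s₀ + δ₁) ((s₀ + 1)/2) with hspdef
  have hspgt : s₀ < sp := lt_min (by linarith) (by linarith)
  have hsplt : sp < 1 := lt_of_le_of_lt (min_le_right _ _) (by linarith)
  have hspIcc : sp ∈ Set.Icc (0:ℝ) 1 := ⟨le_trans hs₀0 hspgt.le, hsplt.le⟩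
  have hup : ζ₀ < y sp := by
    rw [← hyG]; exact ymono ⟨hs₀0, hs₀1.le⟩ hspIcc hspgt
  have hupper : ∀ ζ, ζ ≤ ζ₀ + (y sp - ζ₀)/2 → G y ζ ≤ s₀ + δ₁ := by
    intro ζ hζ
    have : min ζ 1 ≤ y sp := le_trans (min_le_left _ _) (by linarith)
    exact le_trans (G_le hspIcc this) (min_le_left _ _)
  -- lower part
  have hlower : ∃ d > 0, ∀ ζ, ζ₀ - d ≤ ζ → s₀ - δ₁ ≤ G y ζ := by
    rcases le_or_gt s₀ δ₁ with hcase | hcase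
    · exact ⟨1, zero_lt_one, fun ζ _ => le_trans (by linarith) (G_mem hy1 ζ).1⟩
    · set sm : ℝ := s₀ - δ₁ with hsmdef
      have hsmIco : sm ∈ Set.Ico (0:ℝ) 1 := ⟨by linarith, by linarith⟩
      have hlow : y sm < ζ₀ := by
        rw [← hyG]
        exact ymono ⟨hsmIco.1, hsmIco.2.le⟩ ⟨hs₀0, hs₀1.le⟩ (by linarith)
      refine ⟨(ζ₀ - y sm)/2, by linarith, fun ζ hζ => ?_⟩
      have : y sm ≤ ζ := by linarith
      have := G_mono hy1 this
      rwa [G_y ycont ymono hy0 hy1 hsmIco] at this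
  obtain ⟨d, hd, hdprop⟩ := hlower
  refine ⟨min ((y sp - ζ₀)/2) d, lt_min (by linarith) hd, fun ζ hζ => ?_⟩
  rw [abs_le] at hζ
  have h₁ : ζ ≤ ζ₀ + (y sp - ζ₀)/2 := by
    have := hζ.2; have := min_le_left ((y sp - ζ₀)/2) d; linarith
  have h₂ : ζ₀ - d ≤ ζ := by
    have := hζ.1; have := min_le_right ((y sp - ζ₀)/2) d; linarith
  rw [abs_le]
  exact ⟨by have := hdprop ζ h₂; linarith, by have := hupper ζ h₁; linarith⟩

/-- Quantitative increment bound for `G` from lower bounds on `y'`. -/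
lemma G_diff_le (hy : MemW11 y y') (ycont : ContinuousOn y (Set.Icc 0 1))
    (ymono : StrictMonoOn y (Set.Icc 0 1)) (hy0 : y 0 = 0) (hy1 : y 1 = 1)
    {ζ₁ ζ₂ m : ℝ} (h0 : 0 ≤ ζ₁) (h12 : ζ₁ ≤ ζ₂) (h2 : ζ₂ < 1) (hm : 0 < m)
    (hq' : ∀ ζ, ζ₁ ≤ ζ → ζ ≤ ζ₂ → m ≤ y' (G y ζ)) :
    G y ζ₂ - G y ζ₁ ≤ (ζ₂ - ζ₁)/m := by
  set s₁ := G y ζ₁ with hs₁def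
  set s₂ := G y ζ₂ with hs₂def
  obtain ⟨hy1', hs₁1⟩ := y_G ycont ymono hy0 hy1 h0 (lt_of_le_of_lt h12 h2)
  obtain ⟨hy2', hs₂1⟩ := y_G ycont ymono hy0 hy1 (le_trans h0 h12) h2
  have hs₁0 : 0 ≤ s₁ := (G_mem hy1 ζ₁).1
  have hs₂0 : 0 ≤ s₂ := (G_mem hy1 ζ₂).1
  have h12' : s₁ ≤ s₂ := G_mono hy1 h12
  have hsub : Set.uIcc s₁ s₂ ⊆ Set.uIcc (0:ℝ) 1 := by
    rw [Set.uIcc_of_le h12', Set.uIcc_of_le zero_le_one]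
    exact Set.Icc_subset_Icc hs₁0 hs₂1.le
  have hint : IntervalIntegrable y' volume s₁ s₂ := hy.1.mono_set hsub
  have hrep : y s₂ - y s₁ = ∫ u in s₁..s₂, y' u := by
    have e1 := hy.2 s₁ ⟨hs₁0, hs₂1.le.trans' h12'⟩
    have e2 := hy.2 s₂ ⟨hs₂0, hs₂1.le⟩
    rw [e1, e2]
    have hint0 : ∀ t : ℝ, 0 ≤ t → t ≤ 1 → IntervalIntegrable y' volume 0 t := by
      intro t h0t ht1
      refine hy.1.mono_set ?_
      rw [Set.uIcc_of_le h0t, Set.uIcc_of_le zero_le_one]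
      exact Set.Icc_subset_Icc le_rfl ht1
    have := intervalIntegral.integral_interval_sub_left
      (hint0 s₂ hs₂0 hs₂1.le) (hint0 s₁ hs₁0 hs₁1.le)
    rw [← this]; ring
  have hbound : (s₂ - s₁) * m ≤ y s₂ - y s₁ := by
    rw [hrep]
    have hconst : IntervalIntegrable (fun _ : ℝ => m) volume s₁ s₂ :=
      intervalIntegrable_const
    have := intervalIntegral.integral_mono_on h12' hconst hint (fun s hs => by
      have hsIco : s ∈ Set.Ico (0:ℝ) 1 :=
        ⟨le_trans hs₁0 hs.1, lt_of_le_of_lt hs.2 hs₂1⟩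
      have hy_s1 : ζ₁ ≤ y s := by
        rw [← hy1']; exact ymono.monotoneOn ⟨hs₁0, hs₁1.le⟩ ⟨hsIco.1, hsIco.2.le⟩ hs.1
      have hy_s2 : y s ≤ ζ₂ := by
        rw [← hy2']; exact ymono.monotoneOn ⟨hsIco.1, hsIco.2.le⟩ ⟨hs₂0, hs₂1.le⟩ hs.2
      have := hq' (y s) hy_s1 hy_s2
      rwa [G_y ycont ymono hy0 hy1 hsIco] at this)
    rw [intervalIntegral.integral_const, smul_eq_mul] at this
    linarith
  rw [le_div_iff₀ hm]
  calc (s₂ - s₁) * m ≤ y s₂ - y s₁ := hbound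
    _ = ζ₂ - ζ₁ := by rw [hy1', hy2']


lemma G_q {q : ℝ → ℝ} (ycont : ContinuousOn y (Set.Icc 0 1))
    (ymono : StrictMonoOn y (Set.Icc 0 1)) (hy0 : y 0 = 0) (hy1 : y 1 = 1)
    (hq : ∀ s ∈ Set.Ico (0:ℝ) 1, q (y s) = y' s)
    {ζ : ℝ} (h0 : 0 ≤ ζ) (h1 : ζ < 1) : q ζ = y' (G y ζ) := by
  obtain ⟨hyG, hG1⟩ := y_G ycont ymono hy0 hy1 h0 h1
  have := hq (G y ζ) ⟨(G_mem hy1 ζ).1, hG1⟩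
  rwa [hyG] at this

/-- Increment bound for `G` near `1`, allowing `ζ₂ ≥ 1`. -/
lemma G_diff_le_top (hy : MemW11 y y') (ycont : ContinuousOn y (Set.Icc 0 1))
    (ymono : StrictMonoOn y (Set.Icc 0 1)) (hy0 : y 0 = 0) (hy1 : y 1 = 1)
    {a M ζ₁ ζ₂ : ℝ} (ha : a ∈ Set.Ico (0:ℝ) 1) (hM : 0 < M)
    (hy'M : ∀ s, a ≤ s → s < 1 → M ≤ y' s)
    (h1 : y a ≤ ζ₁) (h12 : ζ₁ ≤ ζ₂) :
    G y ζ₂ - G y ζ₁ ≤ (ζ₂ - ζ₁)/M := by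
  have haIcc : a ∈ Set.Icc (0:ℝ) 1 := ⟨ha.1, ha.2.le⟩
  have hb0 : 0 ≤ y a := by
    rw [← hy0]; exact ymono.monotoneOn ⟨le_refl 0, zero_le_one⟩ haIcc ha.1
  have h10 : 0 ≤ ζ₁ := le_trans hb0 h1
  rcases le_or_gt 1 ζ₁ with hcase | hcase
  · rw [G_eq_one ymono hy1 hcase, G_eq_one ymono hy1 (le_trans hcase h12)]
    simp only [sub_self]
    exact div_nonneg (by linarith) hM.le
  · have hgen : ∀ ζ, ζ₁ ≤ ζ → ζ < 1 → M ≤ y' (G y ζ) := by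
      intro ζ hl hu
      have h0ζ : 0 ≤ ζ := le_trans h10 hl
      refine hy'M (G y ζ) ?_ (y_G ycont ymono hy0 hy1 h0ζ hu).2
      have := G_mono hy1 (le_trans h1 hl)
      rwa [G_y ycont ymono hy0 hy1 ha] at this
    rcases lt_or_ge ζ₂ 1 with hcase2 | hcase2
    · exact G_diff_le hy ycont ymono hy0 hy1 h10 h12 hcase2 hM
        (fun ζ hl hu => hgen ζ hl (lt_of_le_of_lt hu hcase2))
    · rw [G_eq_one ymono hy1 hcase2]
      have key : 1 ≤ G y ζ₁ + (1 - ζ₁)/M := by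
        by_contra hcon
        push_neg at hcon
        set c : ℝ := (G y ζ₁ + (1 - ζ₁)/M + 1)/2 with hcdef
        have hc1 : c < 1 := by
          have : G y ζ₁ + (1 - ζ₁)/M < 1 := hcon
          simp only [hcdef]; linarith
        have hc0 : 0 ≤ c := by
          have h1' : 0 ≤ G y ζ₁ := (G_mem hy1 ζ₁).1
          have h2' : 0 ≤ (1 - ζ₁)/M := div_nonneg (by linarith) hM.le
          simp only [hcdef]; linarith
        have hycInt : c ∈ Set.Ico (0:ℝ) 1 := ⟨hc0, hc1⟩
        have hyc1 : y c < 1 := by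
          rw [← hy1]; exact ymono ⟨hc0, hc1.le⟩ ⟨zero_le_one, le_refl 1⟩ hc1
        set ζ : ℝ := max (y c) ζ₁ with hζdef
        have hζ1 : ζ < 1 := max_lt hyc1 hcase
        have hζζ₁ : ζ₁ ≤ ζ := le_max_right _ _
        have hdiff : G y ζ - G y ζ₁ ≤ (ζ - ζ₁)/M :=
          G_diff_le hy ycont ymono hy0 hy1 h10 hζζ₁ hζ1 hM
            (fun ξ hl hu => hgen ξ hl (lt_of_le_of_lt hu hζ1))
        have hGζ : c ≤ G y ζ := by
          have := G_mono hy1 (le_max_left (y c) ζ₁)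
          rwa [G_y ycont ymono hy0 hy1 hycInt] at this
        have hdiv : (ζ - ζ₁)/M ≤ (1 - ζ₁)/M := by
          apply div_le_div_of_nonneg_right ?_ hM.le
          · linarith
        have : c ≤ G y ζ₁ + (1 - ζ₁)/M := by linarith
        simp only [hcdef] at this
        linarith [hcon]
      have hdiv2 : (1 - ζ₁)/M ≤ (ζ₂ - ζ₁)/M := by
        apply div_le_div_of_nonneg_right ?_ hM.le
        · linarith
      linarith


set_option maxHeartbeats 1000000 in
/-- The core contradiction: no Lipschitz competitor can satisfy `z' ≤ q(z)` a.e. -/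
lemma no_better {z z' q : ℝ → ℝ} {C : ℝ≥0}
    (hy : MemW11 y y') (hz : MemW11 z z')
    (ycont : ContinuousOn y (Set.Icc 0 1)) (ymono : StrictMonoOn y (Set.Icc 0 1))
    (hy0 : y 0 = 0) (hy1 : y 1 = 1)
    (hcont : ContinuousOn y' (Set.Ico (0:ℝ) 1))
    (hy'pos : ∀ s ∈ Set.Ico (0:ℝ) 1, 0 < y' s)
    (hy'top : Tendsto y' (nhdsWithin 1 (Set.Iio 1)) atTop)
    (hq : ∀ s ∈ Set.Ico (0:ℝ) 1, q (y s) = y' s)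
    (hlip : LipschitzOnWith C z (Set.Icc 0 1)) (hz0 : z 0 = 0) (hz1 : z 1 = 1)
    (H : ∀ᵐ τ, τ ∈ Set.Icc (0:ℝ) 1 → z τ ∈ Set.Ico (0:ℝ) 1 → z' τ ≤ q (z τ)) :
    False := by
  have hC0 : (0:ℝ) ≤ (C:ℝ) := C.coe_nonneg
  have zcont : ContinuousOn z (Set.Icc 0 1) := hlip.continuousOn
  have hzlip : ∀ s ∈ Set.Icc (0:ℝ) 1, ∀ t ∈ Set.Icc (0:ℝ) 1,
      |z t - z s| ≤ (C:ℝ) * |t - s| := by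
    intro s hs t ht
    have := hlip.dist_le_mul t ht s hs
    rwa [Real.dist_eq, Real.dist_eq] at this
  have hint0z : ∀ t : ℝ, 0 ≤ t → t ≤ 1 → IntervalIntegrable z' volume 0 t := by
    intro t h0t ht1
    refine hz.1.mono_set ?_
    rw [Set.uIcc_of_le h0t, Set.uIcc_of_le zero_le_one]
    exact Set.Icc_subset_Icc le_rfl ht1
  have zrep : ∀ s t : ℝ, s ∈ Set.Icc (0:ℝ) 1 → t ∈ Set.Icc (0:ℝ) 1 →
      z t - z s = ∫ u in s..t, z' u := by
    intro s t hs ht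
    rw [hz.2 s hs, hz.2 t ht]
    have := intervalIntegral.integral_interval_sub_left
      (hint0z t ht.1 ht.2) (hint0z s hs.1 hs.2)
    rw [← this]; ring
  have hint0y : ∀ t : ℝ, 0 ≤ t → t ≤ 1 → IntervalIntegrable y' volume 0 t := by
    intro t h0t ht1
    refine hy.1.mono_set ?_
    rw [Set.uIcc_of_le h0t, Set.uIcc_of_le zero_le_one]
    exact Set.Icc_subset_Icc le_rfl ht1
  have hzsub : ∀ s t : ℝ, 0 ≤ s → s ≤ t → t ≤ 1 → IntervalIntegrable z' volume s t := by
    intro s t h0 hst ht1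
    refine hz.1.mono_set ?_
    rw [Set.uIcc_of_le hst, Set.uIcc_of_le zero_le_one]
    exact Set.Icc_subset_Icc h0 ht1
  -- extract the threshold `a`
  have hev : {s : ℝ | (C:ℝ)+1 ≤ y' s} ∈ nhdsWithin 1 (Set.Iio 1) :=
    hy'top.eventually (eventually_ge_atTop ((C:ℝ)+1))
  obtain ⟨εa, hεa, hball⟩ := Metric.mem_nhdsWithin_iff.1 hev
  set a : ℝ := max (1 - εa/2) 0 with hadef
  have ha : a ∈ Set.Ico (0:ℝ) 1 := ⟨le_max_right _ _, max_lt (by linarith) one_pos⟩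
  have haIcc : a ∈ Set.Icc (0:ℝ) 1 := ⟨ha.1, ha.2.le⟩
  have hM : ∀ s, a ≤ s → s < 1 → (C:ℝ)+1 ≤ y' s := by
    intro s h1 h2
    refine hball ⟨?_, h2⟩
    rw [Metric.mem_ball, Real.dist_eq, abs_of_nonpos (by linarith)]
    have : 1 - εa/2 ≤ a := le_max_left _ _
    linarith
  set b : ℝ := y a with hbdef
  have hb1 : b < 1 := by rw [← hy1]; exact ymono haIcc ⟨zero_le_one, le_refl 1⟩ ha.2
  have hb0 : 0 ≤ b := by
    rw [← hy0]; exact ymono.monotoneOn ⟨le_refl 0, zero_le_one⟩ haIcc ha.1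
  have hCpos : (0:ℝ) < (C:ℝ)+1 := by linarith
  -- the key local estimate
  have loc : ∀ u ∈ Set.Ico (0:ℝ) 1, ∀ ε > (0:ℝ), ∃ δ > (0:ℝ), ∀ t₁ t₂ : ℝ,
      t₁ ∈ Set.Icc (0:ℝ) 1 → t₂ ∈ Set.Icc (0:ℝ) 1 → t₁ ≤ t₂ →
      u - δ ≤ t₁ → t₂ ≤ u + δ →
      G y (z t₂) - G y (z t₁) ≤ (1+ε)*(t₂ - t₁) := by
    intro u hu ε hε
    have huIcc : u ∈ Set.Icc (0:ℝ) 1 := ⟨hu.1, hu.2.le⟩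
    set ζ₀ : ℝ := z u with hζ₀def
    rcases lt_or_ge b ζ₀ with hbcase | hbcase
    · -- `z` is above `b = y a` on the window
      refine ⟨(ζ₀ - b)/((C:ℝ)+1), div_pos (by linarith) hCpos, fun t₁ t₂ h₁ h₂ h12 hl hr => ?_⟩
      have hnn : (0:ℝ) ≤ (1+ε)*(t₂-t₁) := by nlinarith
      have ht₁win : |t₁ - u| ≤ (ζ₀ - b)/((C:ℝ)+1) := by
        rw [abs_le]; constructor
        · linarith
        · have : t₁ ≤ u + (ζ₀ - b)/((C:ℝ)+1) := le_trans h12 hr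
          linarith
      have hz1b : b ≤ z t₁ := by
        have h1 := hzlip u huIcc t₁ h₁
        have h2 : |z t₁ - ζ₀| ≤ (C:ℝ) * ((ζ₀ - b)/((C:ℝ)+1)) :=
          le_trans h1 (mul_le_mul_of_nonneg_left ht₁win hC0)
        have h3 : (C:ℝ) * ((ζ₀ - b)/((C:ℝ)+1)) ≤ ζ₀ - b := by
          rw [← mul_div_assoc, div_le_iff₀ hCpos]
          nlinarith
        have := (abs_le.1 h2).1
        linarith
      rcases le_or_gt (z t₂) (z t₁) with hzz | hzz
      · have := G_mono hy1 hzz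
        linarith
      · have hdiff := G_diff_le_top hy ycont ymono hy0 hy1 ha hCpos
          (fun s h1 h2 => hM s h1 h2) hz1b hzz.le
        have hzd : z t₂ - z t₁ ≤ (C:ℝ) * (t₂ - t₁) := by
          have h1 := hzlip t₁ h₁ t₂ h₂
          have h2 : |t₂ - t₁| = t₂ - t₁ := abs_of_nonneg (by linarith)
          rw [h2] at h1
          linarith [le_abs_self (z t₂ - z t₁)]
        have h4 : (z t₂ - z t₁)/((C:ℝ)+1) ≤ (1+ε)*(t₂-t₁) := by
          rw [div_le_iff₀ hCpos]
          nlinarith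
        linarith
    rcases lt_or_ge ζ₀ 0 with hneg | hpos
    · -- `z` is negative on the window
      refine ⟨(-ζ₀)/((C:ℝ)+1), div_pos (by linarith) hCpos, fun t₁ t₂ h₁ h₂ h12 hl hr => ?_⟩
      have hnn : (0:ℝ) ≤ (1+ε)*(t₂-t₁) := by nlinarith
      have ht₂win : |t₂ - u| ≤ (-ζ₀)/((C:ℝ)+1) := by
        rw [abs_le]; constructor
        · have : u - (-ζ₀)/((C:ℝ)+1) ≤ t₁ := hl
          linarith
        · linarith
      have hz2neg : z t₂ ≤ 0 := by
        have h1 := hzlip u huIcc t₂ h₂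
        have h2 : |z t₂ - ζ₀| ≤ (C:ℝ) * ((-ζ₀)/((C:ℝ)+1)) :=
          le_trans h1 (mul_le_mul_of_nonneg_left ht₂win hC0)
        have h3 : (C:ℝ) * ((-ζ₀)/((C:ℝ)+1)) ≤ -ζ₀ := by
          rw [← mul_div_assoc, div_le_iff₀ hCpos]
          nlinarith
        have := (abs_le.1 h2).2
        linarith
      have hG2 : G y (z t₂) = 0 := G_eq_zero hy0 hy1 hz2neg
      have hG1 : 0 ≤ G y (z t₁) := (G_mem hy1 (z t₁)).1
      linarith
    · -- main case : `0 ≤ ζ₀ ≤ b < 1`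
      have hζ₀1 : ζ₀ < 1 := lt_of_le_of_lt hbcase hb1
      set s₀ : ℝ := G y ζ₀ with hs₀def
      obtain ⟨hys₀, hs₀1⟩ := y_G ycont ymono hy0 hy1 hpos hζ₀1
      have hs₀Ico : s₀ ∈ Set.Ico (0:ℝ) 1 := ⟨(G_mem hy1 ζ₀).1, hs₀1⟩
      set v₀ : ℝ := y' s₀ with hv₀def
      have hv₀ : 0 < v₀ := hy'pos s₀ hs₀Ico
      set ε' : ℝ := ε * v₀ / (ε + 2) with hε'def
      have hε' : 0 < ε' := by positivity
      have hv₀ε' : 0 < v₀ - ε' := by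
        have : ε' < v₀ := by
          rw [hε'def, div_lt_iff₀ (by linarith)]
          nlinarith
        linarith
      have hεv : ε' * (ε+2) = ε * v₀ := by
        rw [hε'def]; field_simp
      have hkey : v₀ + ε' ≤ (1+ε) * (v₀ - ε') := by nlinarith [hεv]
      -- continuity of y' at s₀ within Ico
      have hcw := hcont s₀ hs₀Ico
      rw [Metric.continuousWithinAt_iff] at hcw
      obtain ⟨δ₁, hδ₁, hδ₁prop⟩ := hcw ε' hε'
      obtain ⟨δ₂, hδ₂, hδ₂prop⟩ := G_approx ycont ymono hy0 hy1 hpos hζ₀1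
        (show (0:ℝ) < δ₁/2 by linarith)
      set δ : ℝ := min (δ₂/((C:ℝ)+1)) ((1-b)/((C:ℝ)+1)) with hδdef
      have hδ : 0 < δ := lt_min (div_pos hδ₂ hCpos) (div_pos (by linarith) hCpos)
      refine ⟨δ, hδ, fun t₁ t₂ h₁ h₂ h12 hl hr => ?_⟩
      have hwin : ∀ τ, t₁ ≤ τ → τ ≤ t₂ → |z τ - ζ₀| ≤ (C:ℝ) * δ := by
        intro τ hτ1 hτ2
        have hτIcc : τ ∈ Set.Icc (0:ℝ) 1 := ⟨le_trans h₁.1 hτ1, le_trans hτ2 h₂.2⟩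
        have h1 := hzlip u huIcc τ hτIcc
        have h2 : |τ - u| ≤ δ := by
          rw [abs_le]; constructor
          · linarith
          · linarith
        exact le_trans h1 (mul_le_mul_of_nonneg_left h2 hC0)
      have hCδδ₂ : (C:ℝ) * δ ≤ δ₂ := by
        have h1 : δ ≤ δ₂/((C:ℝ)+1) := min_le_left _ _
        have h2 : (C:ℝ) * δ ≤ (C:ℝ) * (δ₂/((C:ℝ)+1)) := mul_le_mul_of_nonneg_left h1 hC0
        have h3 : (C:ℝ) * (δ₂/((C:ℝ)+1)) ≤ δ₂ := by
          rw [← mul_div_assoc, div_le_iff₀ hCpos]; nlinarith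
        linarith
      have hCδ1b : ζ₀ + (C:ℝ)*δ < 1 := by
        have h1 : δ ≤ (1-b)/((C:ℝ)+1) := min_le_right _ _
        have h2 : (C:ℝ) * δ ≤ (C:ℝ) * ((1-b)/((C:ℝ)+1)) := mul_le_mul_of_nonneg_left h1 hC0
        have h3 : (C:ℝ) * ((1-b)/((C:ℝ)+1)) < 1 - b := by
          rw [← mul_div_assoc, div_lt_iff₀ hCpos]; nlinarith
        linarith
      have hy'win : ∀ ζ, |ζ - ζ₀| ≤ (C:ℝ)*δ → 0 ≤ ζ → ζ < 1 → |y' (G y ζ) - v₀| < ε' := by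
        intro ζ hd h0ζ h1ζ
        have hGmem : G y ζ ∈ Set.Ico (0:ℝ) 1 :=
          ⟨(G_mem hy1 ζ).1, (y_G ycont ymono hy0 hy1 h0ζ h1ζ).2⟩
        have hGd : |G y ζ - s₀| ≤ δ₁/2 := hδ₂prop ζ (le_trans hd hCδδ₂)
        have := hδ₁prop hGmem (show dist (G y ζ) s₀ < δ₁ by
          rw [Real.dist_eq]; linarith [hGd])
        rwa [Real.dist_eq] at this
      rcases le_or_gt (z t₂) (max (z t₁) 0) with hzz | hzz
      · have hnn : (0:ℝ) ≤ (1+ε)*(t₂-t₁) := by nlinarith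
        have hG2 : G y (z t₂) ≤ G y (z t₁) := by
          rcases le_or_gt 0 (z t₁) with hc | hc
          · rw [max_eq_left hc] at hzz; exact G_mono hy1 hzz
          · rw [max_eq_right hc.le] at hzz
            rw [G_eq_zero hy0 hy1 hc.le]
            rw [G_eq_zero hy0 hy1 hzz]
        linarith
      · set ξ₁ : ℝ := max (z t₁) 0 with hξ₁def
        have hξnn : 0 ≤ ξ₁ := le_max_right _ _
        have hξz : z t₁ ≤ ξ₁ := le_max_left _ _
        have hzt₂1 : z t₂ < 1 := by
          have := (abs_le.1 (hwin t₂ h12 le_rfl)).2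
          linarith
        set S' : Set ℝ := {τ ∈ Set.Icc t₁ t₂ | z τ ≤ ξ₁} with hS'def
        have ht₁S' : t₁ ∈ S' := ⟨⟨le_refl t₁, h12⟩, hξz⟩
        have hS'ne : S'.Nonempty := ⟨t₁, ht₁S'⟩
        have hS'bdd : BddAbove S' := ⟨t₂, fun τ hτ => hτ.1.2⟩
        have hS'cl : IsClosed S' := by
          have : S' = Set.Icc t₁ t₂ ∩ z ⁻¹' (Set.Iic ξ₁) := rfl
          rw [this]
          exact (zcont.mono (Set.Icc_subset_Icc h₁.1 h₂.2)).preimage_isClosed_of_isClosed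
            isClosed_Icc isClosed_Iic
        set σ : ℝ := sSup S' with hσdef
        have hσS' : σ ∈ S' := hS'cl.csSup_mem hS'ne hS'bdd
        have hσ1 : t₁ ≤ σ := le_csSup hS'bdd ht₁S'
        have hσ2 : σ ≤ t₂ := hσS'.1.2
        have hσz : z σ ≤ ξ₁ := hσS'.2
        have hσIcc : σ ∈ Set.Icc (0:ℝ) 1 := ⟨le_trans h₁.1 hσ1, le_trans hσ2 h₂.2⟩
        have hmid : ∀ τ, σ < τ → τ ≤ t₂ → 0 < z τ ∧ z τ < 1 := by
          intro τ hτ1 hτ2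
          have hτS' : τ ∉ S' := fun hmem => absurd (le_csSup hS'bdd hmem) (not_le.2 hτ1)
          have hτmem : τ ∈ Set.Icc t₁ t₂ := ⟨le_trans hσ1 hτ1.le, hτ2⟩
          have hξτ : ξ₁ < z τ := by
            by_contra hcon
            push_neg at hcon
            exact hτS' ⟨hτmem, hcon⟩
          have : z τ < 1 := by
            have := (abs_le.1 (hwin τ hτmem.1 hτ2)).2
            linarith
          exact ⟨lt_of_le_of_lt hξnn hξτ, this⟩
        have hzint : z t₂ - z σ ≤ (v₀ + ε') * (t₂ - σ) := by
          have hne : ∀ᵐ τ : ℝ, τ ≠ σ := by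
            simpa using measure_eq_zero_iff_ae_notMem.mp (measure_singleton σ)
          have hae : z' ≤ᵐ[volume.restrict (Set.Icc σ t₂)] (fun _ => v₀ + ε') := by
            filter_upwards [ae_restrict_mem measurableSet_Icc,
              ae_restrict_of_ae hne, ae_restrict_of_ae H] with τ hτ hτσ hHτ
            have hτσ' : σ < τ := lt_of_le_of_ne hτ.1 (Ne.symm hτσ)
            obtain ⟨hzτ0, hzτ1⟩ := hmid τ hτσ' hτ.2
            have hτIcc : τ ∈ Set.Icc (0:ℝ) 1 :=
              ⟨le_trans hσIcc.1 hτ.1, le_trans hτ.2 h₂.2⟩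
            have h5 := hHτ hτIcc ⟨hzτ0.le, hzτ1⟩
            rw [G_q ycont ymono hy0 hy1 hq hzτ0.le hzτ1] at h5
            have hwτ : |z τ - ζ₀| ≤ (C:ℝ)*δ := hwin τ (le_trans hσ1 hτσ'.le) hτ.2
            have h6 := (abs_lt.1 (hy'win (z τ) hwτ hzτ0.le hzτ1)).2
            show z' τ ≤ v₀ + ε'
            linarith
          have h7 := intervalIntegral.integral_mono_ae_restrict hσ2
            (hzsub σ t₂ hσIcc.1 hσ2 h₂.2) intervalIntegrable_const hae
          rw [intervalIntegral.integral_const, smul_eq_mul] at h7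
          have h8 := zrep σ t₂ hσIcc h₂
          rw [← h8] at h7
          linarith
        have hGt₁ : G y (z t₁) = G y ξ₁ := by
          rcases le_or_gt 0 (z t₁) with hc | hc
          · rw [hξ₁def, max_eq_left hc]
          · rw [hξ₁def, max_eq_right hc.le, G_eq_zero hy0 hy1 hc.le,
              G_eq_zero hy0 hy1 le_rfl]
        have hGdiff : G y (z t₂) - G y ξ₁ ≤ (z t₂ - ξ₁)/(v₀ - ε') := by
          refine G_diff_le hy ycont ymono hy0 hy1 hξnn hzz.le hzt₂1 hv₀ε' ?_
          intro ζ hlζ huζ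
          have hζ₀d : |ζ - ζ₀| ≤ (C:ℝ)*δ := by
            have hup : ζ - ζ₀ ≤ (C:ℝ)*δ := by
              have := (abs_le.1 (hwin t₂ h12 le_rfl)).2
              linarith
            have hdown : -((C:ℝ)*δ) ≤ ζ - ζ₀ := by
              rcases le_or_gt 0 (z t₁) with hc | hc
              · have h9 : ξ₁ = z t₁ := max_eq_left hc
                have := (abs_le.1 (hwin t₁ le_rfl h12)).1
                rw [h9] at hlζ
                linarith
              · have := (abs_le.1 (hwin t₁ le_rfl h12)).1
                have h10 : 0 ≤ ζ := le_trans hξnn hlζ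
                linarith
            rw [abs_le]; exact ⟨hdown, hup⟩
          have h11 := (abs_lt.1 (hy'win ζ hζ₀d (le_trans hξnn hlζ)
            (lt_of_le_of_lt huζ hzt₂1))).1
          linarith
        have hcomb : z t₂ - ξ₁ ≤ (v₀+ε')*(t₂ - t₁) := by
          have h12' : z t₂ - ξ₁ ≤ z t₂ - z σ := by linarith
          have h13 : (v₀+ε')*(t₂-σ) ≤ (v₀+ε')*(t₂-t₁) := by
            apply mul_le_mul_of_nonneg_left _ (by linarith)
            linarith
          linarith
        have hfin : (z t₂ - ξ₁)/(v₀ - ε') ≤ (1+ε)*(t₂-t₁) := by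
          rw [div_le_iff₀ hv₀ε']
          have h14 : (0:ℝ) ≤ t₂ - t₁ := by linarith only [h12]
          calc z t₂ - ξ₁ ≤ (v₀+ε')*(t₂-t₁) := hcomb
            _ ≤ ((1+ε)*(v₀-ε'))*(t₂-t₁) := mul_le_mul_of_nonneg_right hkey h14
            _ = (1+ε)*(t₂-t₁)*(v₀-ε') := by ring
        rw [hGt₁]
        linarith only [hGdiff, hfin]
  -- propagation of the estimate on `[0, T]`
  set T : ℝ := (a+1)/2 with hTdef
  have hTa : a < T := by
    have := ha.2; simp only [hTdef]; linarith
  have hT1 : T < 1 := by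
    have := ha.2; simp only [hTdef]; linarith
  have hT0 : 0 < T := by
    have := ha.1; simp only [hTdef]; linarith
  have hTIcc : T ∈ Set.Icc (0:ℝ) 1 := ⟨hT0.le, hT1.le⟩
  have hTIco : T ∈ Set.Ico (0:ℝ) 1 := ⟨hT0.le, hT1⟩
  have hprop : ∀ ε > (0:ℝ), G y (z T) ≤ (1+ε)*T := by
    intro ε hε
    set U : Set ℝ := {t | t ∈ Set.Icc 0 T ∧ ∀ τ, 0 ≤ τ → τ ≤ t → G y (z τ) ≤ (1+ε)*τ}
      with hUdef
    have h0U : (0:ℝ) ∈ U := by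
      refine ⟨⟨le_refl 0, hT0.le⟩, fun τ h0 h1 => ?_⟩
      have hτ0 : τ = 0 := le_antisymm h1 h0
      rw [hτ0, hz0, G_eq_zero hy0 hy1 (le_refl 0)]
      simp
    have hUbdd : BddAbove U := ⟨T, fun t ht => ht.1.2⟩
    have hUne : U.Nonempty := ⟨0, h0U⟩
    set u : ℝ := sSup U with hudef
    have huIcc : u ∈ Set.Icc (0:ℝ) T :=
      ⟨le_csSup hUbdd h0U, csSup_le hUne (fun t ht => ht.1.2)⟩
    have huIco : u ∈ Set.Ico (0:ℝ) 1 := ⟨huIcc.1, lt_of_le_of_lt huIcc.2 hT1⟩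
    have hulem : ∀ τ, 0 ≤ τ → τ < u → G y (z τ) ≤ (1+ε)*τ := by
      intro τ h0 hτu
      by_contra hcon
      have : u ≤ τ := csSup_le hUne (fun t ht => by
        by_contra hlt
        push_neg at hlt
        exact hcon (ht.2 τ h0 hlt.le))
      linarith
    have huU : ∀ τ, 0 ≤ τ → τ ≤ u → G y (z τ) ≤ (1+ε)*τ := by
      intro τ h0 hτu
      rcases lt_or_eq_of_le hτu with hlt | heq
      · exact hulem τ h0 hlt
      · rcases eq_or_lt_of_le huIcc.1 with hu0 | hu0
        · have hτ0 : τ = 0 := by rw [heq, ← hu0]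
          rw [hτ0, hz0, G_eq_zero hy0 hy1 (le_refl 0)]
          simp
        · obtain ⟨δ, hδ, hloc⟩ := loc u huIco ε hε
          set t₁ : ℝ := max (u - δ) (u/2) with ht₁def
          have ht₁u : t₁ < u := max_lt (by linarith) (by linarith)
          have ht₁0 : 0 ≤ t₁ := le_trans (by linarith) (le_max_right _ _)
          have hu1 : u ≤ 1 := le_trans huIcc.2 hT1.le
          have h15 := hloc t₁ u ⟨ht₁0, le_trans ht₁u.le hu1⟩ ⟨huIcc.1, hu1⟩
            ht₁u.le (le_max_left _ _) (by linarith)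
          have h16 := hulem t₁ ht₁0 ht₁u
          rw [heq]
          linarith
    have huT : u = T := by
      by_contra hne
      have huT' : u < T := lt_of_le_of_ne huIcc.2 hne
      obtain ⟨δ, hδ, hloc⟩ := loc u huIco ε hε
      set t₂ : ℝ := min (u + δ) T with ht₂def
      have ht₂u : u < t₂ := lt_min (by linarith) huT'
      have ht₂U : t₂ ∈ U := by
        refine ⟨⟨le_trans huIcc.1 ht₂u.le, min_le_right _ _⟩, fun τ h0 hτ => ?_⟩
        rcases le_or_gt τ u with hc | hc
        · exact huU τ h0 hc
        · have hτ1 : τ ≤ 1 := le_trans hτ (le_trans (min_le_right _ _) hT1.le)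
          have h17 := hloc u τ ⟨huIcc.1, le_trans huIcc.2 hT1.le⟩
            ⟨le_trans huIcc.1 hc.le, hτ1⟩ hc.le (by linarith)
            (le_trans hτ (min_le_left _ _))
          have h18 := huU u huIcc.1 (le_refl u)
          linarith
      have : t₂ ≤ u := le_csSup hUbdd ht₂U
      linarith
    have := huU T hT0.le (le_of_eq huT.symm)
    exact this
  have hGzT : G y (z T) ≤ T := by
    refine le_of_forall_pos_le_add fun ε hε => ?_
    have h19 := hprop (ε/T) (div_pos hε hT0)
    have h20 : (1+ε/T)*T = T + ε := by field_simp
    linarith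
  -- endgame
  have hzT1 : z T < 1 := by
    by_contra hge
    push_neg at hge
    rw [G_eq_one ymono hy1 hge] at hGzT
    linarith
  have hzTyT : z T ≤ y T := by
    rcases lt_or_ge (z T) 0 with hc | hc
    · have : 0 ≤ y T := by
        rw [← hy0]; exact ymono.monotoneOn ⟨le_refl 0, zero_le_one⟩ hTIcc hT0.le
      linarith
    · obtain ⟨hyG, hG1⟩ := y_G ycont ymono hy0 hy1 hc hzT1
      rw [← hyG]
      exact ymono.monotoneOn ⟨(G_mem hy1 _).1, hG1.le⟩ hTIcc hGzT
  have hlipT : 1 - z T ≤ (C:ℝ)*(1 - T) := by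
    have h21 := hzlip T hTIcc 1 ⟨zero_le_one, le_refl 1⟩
    rw [hz1] at h21
    have h22 : |1 - T| = 1 - T := abs_of_nonneg (by linarith)
    rw [h22] at h21
    linarith [le_abs_self (1 - z T)]
  have hyT : ((C:ℝ)+1)*(1-T) ≤ 1 - y T := by
    have hintyT : IntervalIntegrable y' volume T 1 := by
      refine hy.1.mono_set ?_
      rw [Set.uIcc_of_le hT1.le, Set.uIcc_of_le zero_le_one]
      exact Set.Icc_subset_Icc hT0.le le_rfl
    have hrepT : y 1 - y T = ∫ u in T..1, y' u := by
      rw [hy.2 T hTIcc, hy.2 1 ⟨zero_le_one, le_refl 1⟩]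
      have := intervalIntegral.integral_interval_sub_left
        (hint0y 1 zero_le_one le_rfl) (hint0y T hT0.le hT1.le)
      rw [← this]; ring
    have hne1 : ∀ᵐ τ : ℝ, τ ≠ 1 := by
      simpa using measure_eq_zero_iff_ae_notMem.mp (measure_singleton (1:ℝ))
    have hae : (fun _ : ℝ => (C:ℝ)+1) ≤ᵐ[volume.restrict (Set.Icc T 1)] y' := by
      filter_upwards [ae_restrict_mem measurableSet_Icc, ae_restrict_of_ae hne1]
        with τ hτ hτ1
      exact hM τ (le_trans hTa.le hτ.1) (lt_of_le_of_ne hτ.2 hτ1)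
    have h23 := intervalIntegral.integral_mono_ae_restrict hT1.le
      intervalIntegrable_const hintyT hae
    rw [intervalIntegral.integral_const, smul_eq_mul] at h23
    rw [hy1] at hrepT
    nlinarith
  nlinarith

end AlbertiAux

open AlbertiAux in
set_option maxHeartbeats 1000000 in
/-- **Example 3.4 (Alberti): occurrence of the Lavrentiev phenomenon for an autonomous,
convex, lower semicontinuous extended-valued problem with both end point conditions.** -/
theorem alberti_example
    (y y' : ℝ → ℝ) (hy : MemW11 y y')
    -- `y` is `C¹` on `[0,1)` with derivative `y'`
    (hderiv : ∀ s ∈ Set.Ico (0:ℝ) 1, HasDerivAt y (y' s) s)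
    (hcont : ContinuousOn y' (Set.Ico (0:ℝ) 1))
    (hy0 : y 0 = 0) (hy1 : y 1 = 1)
    (hy'pos : ∀ s ∈ Set.Ico (0:ℝ) 1, 0 < y' s)
    (hy'top : Tendsto y' (nhdsWithin 1 (Set.Iio 1)) atTop)
    -- `q(ζ) = y'(y⁻¹(ζ))` for `ζ ∈ [0,1)`
    (q : ℝ → ℝ) (hq : ∀ s ∈ Set.Ico (0:ℝ) 1, q (y s) = y' s) :
    -- the functional vanishes at `y`
    (∫⁻ s in Set.Icc (0:ℝ) 1, albertiLag q (y s) (y' s)) = 0 ∧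
    -- but is `+∞` on every Lipschitz function with the same boundary data
    ∀ z z' : ℝ → ℝ, MemW11 z z' →
      (∃ C : ℝ≥0, LipschitzOnWith C z (Set.Icc 0 1)) → z 0 = 0 → z 1 = 1 →
      0 < volume {s ∈ Set.Icc (0:ℝ) 1 | z s ∈ Set.Ico (0:ℝ) 1 ∧ q (z s) < z' s} ∧
      (∫⁻ s in Set.Icc (0:ℝ) 1, albertiLag q (z s) (z' s)) = ⊤ := by
  -- continuity and strict monotonicity of `y`
  have ycont : ContinuousOn y (Set.Icc 0 1) := by
    have hprim : ContinuousOn (fun x => ∫ s in (0:ℝ)..x, y' s) (Set.uIcc 0 1) :=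
      intervalIntegral.continuousOn_primitive_interval' hy.1 Set.left_mem_uIcc
    rw [Set.uIcc_of_le zero_le_one] at hprim
    exact ContinuousOn.congr (continuousOn_const.add hprim) (fun x hx => hy.2 x hx)
  have ymono : StrictMonoOn y (Set.Icc 0 1) := by
    apply strictMonoOn_of_deriv_pos (convex_Icc 0 1) ycont
    intro x hx
    rw [interior_Icc] at hx
    have hxIco : x ∈ Set.Ico (0:ℝ) 1 := ⟨hx.1.le, hx.2⟩
    rw [(hderiv x hxIco).deriv]
    exact hy'pos x hxIco
  constructor
  · -- Part 1 : the functional vanishes at `y`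
    have h1 : volume.restrict (Set.Icc (0:ℝ) 1) = volume.restrict (Set.Ico (0:ℝ) 1) :=
      (Measure.restrict_congr_set Ico_ae_eq_Icc).symm
    rw [h1]
    have hae : ∀ᵐ s ∂volume.restrict (Set.Ico (0:ℝ) 1),
        albertiLag q (y s) (y' s) = 0 := by
      filter_upwards [ae_restrict_mem measurableSet_Ico] with s hs
      have hys : y s ∈ Set.Ico (0:ℝ) 1 := by
        constructor
        · rw [← hy0]
          exact ymono.monotoneOn ⟨le_refl 0, zero_le_one⟩ ⟨hs.1, hs.2.le⟩ hs.1
        · rw [← hy1]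
          exact ymono ⟨hs.1, hs.2.le⟩ ⟨zero_le_one, le_refl 1⟩ hs.2
      unfold albertiLag
      rw [if_pos (Or.inl ⟨hys, le_of_eq (hq s hs).symm⟩)]
    rw [lintegral_congr_ae hae, lintegral_zero]
  · -- Part 2
    intro z z' hz hLip hz0 hz1
    obtain ⟨C, hlip⟩ := hLip
    have hpos : 0 < volume {s ∈ Set.Icc (0:ℝ) 1 |
        z s ∈ Set.Ico (0:ℝ) 1 ∧ q (z s) < z' s} := by
      rw [pos_iff_ne_zero]
      intro h0
      have H : ∀ᵐ τ : ℝ, τ ∈ Set.Icc (0:ℝ) 1 → z τ ∈ Set.Ico (0:ℝ) 1 →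
          z' τ ≤ q (z τ) := by
        filter_upwards [measure_eq_zero_iff_ae_notMem.mp h0] with τ hτ h1 h2
        by_contra hcon
        push_neg at hcon
        exact hτ ⟨h1, h2, hcon⟩
      exact AlbertiAux.no_better hy hz ycont ymono hy0 hy1 hcont hy'pos hy'top hq
        hlip hz0 hz1 H
    refine ⟨hpos, ?_⟩
    -- Now show the integral is infinite.
    set S : Set ℝ := {s ∈ Set.Icc (0:ℝ) 1 | z s ∈ Set.Ico (0:ℝ) 1 ∧ q (z s) < z' s}
      with hSdef
    set ν : Measure ℝ := volume.restrict (Set.Icc (0:ℝ) 1) with hνdef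
    have zcont : ContinuousOn z (Set.Icc 0 1) := hlip.continuousOn
    set cl : ℝ → ℝ := fun s => max 0 (min s 1) with hcldef
    have hclcont : Continuous cl := continuous_const.max (continuous_id.min continuous_const)
    have hclmem : ∀ s, cl s ∈ Set.Icc (0:ℝ) 1 :=
      fun s => ⟨le_max_left _ _, max_le zero_le_one (min_le_right _ _)⟩
    set zt : ℝ → ℝ := z ∘ cl with hztdef
    have hztcont : Continuous zt := zcont.comp_continuous hclcont hclmem
    have hzteq : ∀ s ∈ Set.Icc (0:ℝ) 1, zt s = z s := by
      intro s hs
      simp only [hztdef, Function.comp_apply, hcldef, min_eq_left hs.2, max_eq_right hs.1]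
    set m : ℝ → ℝ := fun s => G y (zt s) with hmdef
    have hmmeas : Measurable m := (G_mono hy1).measurable.comp hztcont.measurable
    set c : ℕ → ℝ := fun n => 1 - 1/((n:ℝ)+2) with hcdef
    have hcIco : ∀ n : ℕ, c n ∈ Set.Ico (0:ℝ) 1 := by
      intro n
      have h2 : (0:ℝ) < (n:ℝ)+2 := by positivity
      constructor
      · have : 1/((n:ℝ)+2) ≤ 1 := by
          rw [div_le_one h2]; linarith [Nat.cast_nonneg (α := ℝ) n]
        simp only [hcdef]; linarith
      · have : 0 < 1/((n:ℝ)+2) := by positivity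
        simp only [hcdef]; linarith only [this]
    set y'' : ℕ → ℝ → ℝ := fun n t => y' (max 0 (min t (c n))) with hy''def
    have hy''cont : ∀ n, Continuous (y'' n) := by
      intro n
      have hsub : Set.Icc (0:ℝ) (c n) ⊆ Set.Ico (0:ℝ) 1 :=
        fun t ht => ⟨ht.1, lt_of_le_of_lt ht.2 (hcIco n).2⟩
      refine (hcont.mono hsub).comp_continuous
        (continuous_const.max (continuous_id.min continuous_const)) (fun t => ?_)
      exact ⟨le_max_left _ _, max_le (hcIco n).1 (min_le_right _ _)⟩
    have hy''eq : ∀ n (ξ : ℝ), 0 ≤ ξ → ξ ≤ c n → y'' n ξ = y' ξ := by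
      intro n ξ h0 h1
      simp only [hy''def, min_eq_left h1, max_eq_right h0]
    set Sn : ℕ → Set ℝ := fun n => {s | (s ∈ Set.Icc (0:ℝ) 1 ∧ zt s ∈ Set.Ico (0:ℝ) 1 ∧
      m s ≤ c n) ∧ y'' n (m s) < z' s} with hSndef
    have hSsub : S ⊆ ⋃ n, Sn n := by
      intro s hs
      obtain ⟨hsIcc, hzIco, hqlt⟩ := hs
      have hzts : zt s = z s := hzteq s hsIcc
      have hm0 : 0 ≤ m s := (G_mem hy1 (zt s)).1
      have hm1 : m s < 1 := by
        simp only [hmdef, hzts]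
        exact (y_G ycont ymono hy0 hy1 hzIco.1 hzIco.2).2
      obtain ⟨n, hn⟩ := exists_nat_one_div_lt (show (0:ℝ) < 1 - m s by linarith)
      have hmcn : m s ≤ c n := by
        have h2 : (0:ℝ) < (n:ℝ)+1 := by positivity
        have h3 : (0:ℝ) < (n:ℝ)+2 := by positivity
        have h4 : 1/((n:ℝ)+2) ≤ 1/((n:ℝ)+1) :=
          one_div_le_one_div_of_le h2 (by linarith)
        simp only [hcdef]
        have h6 := hn
        push_cast at h6 ⊢
        linarith only [h6, h4]
      have hyq : y'' n (m s) = q (z s) := by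
        rw [hy''eq n (m s) hm0 hmcn]
        simp only [hmdef, hzts]
        exact (G_q ycont ymono hy0 hy1 hq hzIco.1 hzIco.2).symm
      refine Set.mem_iUnion.2 ⟨n, ⟨hsIcc, by rw [hzts]; exact hzIco, hmcn⟩, ?_⟩
      rw [hyq]
      exact hqlt
    have hSnpos : ∃ n, 0 < volume (Sn n) := by
      by_contra hcon
      push_neg at hcon
      have hall : ∀ n, volume (Sn n) = 0 :=
        fun n => le_antisymm (by simpa using hcon n) zero_le
      have h0 : volume (⋃ n, Sn n) = 0 := measure_iUnion_null_iff.2 hall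
      have := measure_mono_null hSsub h0
      rw [hSdef] at this
      rw [this] at hpos
      exact lt_irrefl 0 hpos
    obtain ⟨n, hn⟩ := hSnpos
    have hz'aem : AEMeasurable z' ν := by
      have h1 : AEStronglyMeasurable z' (volume.restrict (Set.Ioc (0:ℝ) 1)) :=
        hz.1.1.aestronglyMeasurable
      have h2 : volume.restrict (Set.Icc (0:ℝ) 1) = volume.restrict (Set.Ioc (0:ℝ) 1) :=
        (Measure.restrict_congr_set Ioc_ae_eq_Icc).symm
      rw [hνdef, h2]
      exact h1.aemeasurable
    have hWmeas : MeasurableSet {s : ℝ | s ∈ Set.Icc (0:ℝ) 1 ∧ zt s ∈ Set.Ico (0:ℝ) 1 ∧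
        m s ≤ c n} := by
      have heq : {s : ℝ | s ∈ Set.Icc (0:ℝ) 1 ∧ zt s ∈ Set.Ico (0:ℝ) 1 ∧ m s ≤ c n}
          = Set.Icc (0:ℝ) 1 ∩ (zt ⁻¹' Set.Ico 0 1) ∩ (m ⁻¹' Set.Iic (c n)) := by
        ext t; simp [Set.mem_inter_iff, and_assoc]
      rw [heq]
      exact (measurableSet_Icc.inter (hztcont.measurable measurableSet_Ico)).inter
        (hmmeas measurableSet_Iic)
    have hSnnm : NullMeasurableSet (Sn n) ν := by
      have h3 : Sn n = {s : ℝ | s ∈ Set.Icc (0:ℝ) 1 ∧ zt s ∈ Set.Ico (0:ℝ) 1 ∧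
          m s ≤ c n} ∩ {s : ℝ | (fun t => y'' n (m t)) s < z' s} := rfl
      rw [h3]
      exact hWmeas.nullMeasurableSet.inter
        (nullMeasurableSet_lt ((hy''cont n).measurable.comp hmmeas).aemeasurable hz'aem)
    set Tset : Set ℝ := MeasureTheory.toMeasurable ν (Sn n) with hTdef
    have hTeq : Tset =ᵐ[ν] (Sn n) := NullMeasurableSet.toMeasurable_ae_eq hSnnm
    have hTmeas : MeasurableSet Tset := measurableSet_toMeasurable ν (Sn n)
    have hνSn : ν (Sn n) = volume (Sn n) := by
      rw [hνdef, Measure.restrict_apply' measurableSet_Icc,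
        Set.inter_eq_self_of_subset_left (fun s hs => hs.1.1)]
    have hνT : 0 < ν Tset := by
      rw [measure_congr hTeq, hνSn]; exact hn
    have hflower : (∫⁻ s, albertiLag q (z s) (z' s) ∂(ν.restrict Tset))
        ≤ ∫⁻ s in Set.Icc (0:ℝ) 1, albertiLag q (z s) (z' s) :=
      lintegral_mono' Measure.restrict_le_self (le_refl _)
    have hftop : ∀ᵐ s ∂(ν.restrict Tset), albertiLag q (z s) (z' s) = ⊤ := by
      have h5 : ν (Tset \ Sn n) = 0 := MeasureTheory.ae_le_set.1 hTeq.le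
      have h4 : ∀ᵐ s ∂ν, s ∈ Tset → s ∈ Sn n := by
        filter_upwards [measure_eq_zero_iff_ae_notMem.mp h5] with s hs hsT
        by_contra hcon
        exact hs ⟨hsT, hcon⟩
      filter_upwards [ae_restrict_mem hTmeas, ae_restrict_of_ae h4] with s hsT himp
      obtain ⟨⟨hsIcc, hztIco, hmcn⟩, hlt⟩ := himp hsT
      have hzts : zt s = z s := hzteq s hsIcc
      have hzIco : z s ∈ Set.Ico (0:ℝ) 1 := hzts ▸ hztIco
      have hm0 : 0 ≤ m s := (G_mem hy1 (zt s)).1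
      have hyq : y'' n (m s) = q (z s) := by
        rw [hy''eq n (m s) hm0 hmcn]
        simp only [hmdef, hzts]
        exact (G_q ycont ymono hy0 hy1 hq hzIco.1 hzIco.2).symm
      rw [hyq] at hlt
      unfold albertiLag
      rw [if_neg]
      rintro (⟨h7, h8⟩ | h7)
      · linarith only [h8, hlt]
      · exact h7 hzIco
    have h9 : (∫⁻ s, albertiLag q (z s) (z' s) ∂(ν.restrict Tset)) = ⊤ := by
      rw [lintegral_congr_ae hftop, lintegral_const, Measure.restrict_apply_univ]
      exact ENNReal.top_mul hνT.ne'
    exact eq_top_iff.2 (h9 ▸ hflower)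
end
end

section
/- (Example 3.5: occurrence of the Lavrentiev phenomenon in an autonomous scalar problem with one end point condition.) Let y ∈ W^{1,1}([0,1];ℝ) be of class C² on [0,1), with y(0)=0, y(1)=1, y'(s) > 0 and y''(s) > 0 for all s ∈ [0,1), and lim_{s→1⁻} y'(s) = +∞ (for instance y(s) = 1 − √(1−s)); set q(ζ) := y'(y^{−1}(ζ)) for ζ ∈ [0,1). Define Λ(z,v) = 0 if z ∈ [0,1) and v ≥ q(z), and Λ(z,v) = +∞ otherwise, and F(z) = ∫_0^1 Λ(z(s),z'(s)) ds. Then F(y) = 0, while for every Lipschitz function z : [0,1] → ℝ with z(1) = 1 there exists ε > 0 such that for a.e. s ∈ [1−ε,1] either z(s) ∉ [0,1) or z'(s) < q(z(s)); in particular F(z) = +∞ for every such Lipschitz z, so the Lavrentiev phenomenon occurs for the problem with the single end point condition z(1)=1. -/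
open MeasureTheory Set Filter ENNReal NNReal

noncomputable section

open Classical in
/-- The extended-valued autonomous Lagrangian of Example 3.5:
`Λ(z,v) = 0` if `z ∈ [0,1)` and `v ≥ q(z)`, and `+∞` otherwise. -/
def albertiLag2 (q : ℝ → ℝ) (z v : ℝ) : ℝ≥0∞ :=
  if z ∈ Set.Ico (0:ℝ) 1 ∧ q z ≤ v then 0 else ⊤

open Topology in
lemma deriv_le_of_lipschitz (z z' : ℝ → ℝ) (hz : MemW11 z z') (C : ℝ≥0)
    (hlip : LipschitzOnWith C z (Set.Icc 0 1)) :
    ∀ᵐ x : ℝ ∂volume, x ∈ Set.Ioo (0:ℝ) 1 → z' x ≤ C := by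
  set g : ℝ → ℝ := (Set.Icc (0:ℝ) 1).indicator z' with hg
  have hi : IntegrableOn z' (Set.Icc (0:ℝ) 1) := by
    rw [integrableOn_Icc_iff_integrableOn_Ioc]
    exact (intervalIntegrable_iff_integrableOn_Ioc_of_le zero_le_one).mp hz.1
  have hgint : Integrable g := (integrable_indicator_iff measurableSet_Icc).mpr hi
  have hdiff := IsUnifLocDoublingMeasure.ae_tendsto_average (μ := (volume : Measure ℝ))
    hgint.locallyIntegrable 1
  filter_upwards [hdiff] with x hx hx01
  have hlim : Tendsto (fun r : ℝ => ⨍ y in Metric.closedBall x r, g y) (𝓝[>] (0:ℝ))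
      (𝓝 (g x)) := by
    apply hx (fun _ => x) (fun r => r) tendsto_id
    filter_upwards [self_mem_nhdsWithin] with r (hr : r ∈ Set.Ioi (0:ℝ))
    exact Metric.mem_closedBall_self (by simpa using le_of_lt hr)
  have hgx : g x = z' x := Set.indicator_of_mem (Set.mem_Icc.mpr ⟨hx01.1.le, hx01.2.le⟩) z'
  rw [hgx] at hlim
  refine le_of_tendsto hlim ?_
  have hmin : (0:ℝ) < min x (1 - x) := lt_min hx01.1 (by linarith [hx01.2])
  filter_upwards [Ioo_mem_nhdsGT_of_mem (Set.mem_Ico.mpr ⟨le_refl 0, hmin⟩)] with r hr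
  obtain ⟨hr0, hrm⟩ := hr
  have hxr0 : 0 ≤ x - r := by have := lt_of_lt_of_le hrm (min_le_left _ _); linarith
  have hxr1 : x + r ≤ 1 := by have := lt_of_lt_of_le hrm (min_le_right _ _); linarith
  have hsub : Metric.closedBall x r ⊆ Set.Icc (0:ℝ) 1 := by
    rw [Real.closedBall_eq_Icc]
    exact Set.Icc_subset_Icc hxr0 hxr1
  have hint : ∫ y in Metric.closedBall x r, g y =
      ∫ t in (x - r)..(x + r), z' t := by
    rw [Real.closedBall_eq_Icc]
    rw [setIntegral_congr_fun measurableSet_Icc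
      (fun y hy => Set.indicator_of_mem (by rw [Real.closedBall_eq_Icc] at hsub; exact hsub hy) z')]
    rw [MeasureTheory.integral_Icc_eq_integral_Ioc,
      intervalIntegral.integral_of_le (by linarith)]
  have hii : ∀ a : ℝ, 0 ≤ a → a ≤ 1 → IntervalIntegrable z' volume 0 a := fun a h0 h1 =>
    hz.1.mono_set (Set.uIcc_subset_uIcc Set.left_mem_uIcc
      (by rw [Set.uIcc_of_le zero_le_one]; exact ⟨h0, h1⟩))
  have hval : ∫ t in (x - r)..(x + r), z' t = z (x + r) - z (x - r) := by
    rw [hz.2 (x + r) ⟨by linarith, hxr1⟩, hz.2 (x - r) ⟨hxr0, by linarith⟩]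
    rw [← intervalIntegral.integral_interval_sub_left (hii _ (by linarith) hxr1)
      (hii _ hxr0 (by linarith))]
    ring
  have hdist : z (x + r) - z (x - r) ≤ (C : ℝ) * (2 * r) := by
    have := hlip.dist_le_mul (x + r) ⟨by linarith, hxr1⟩ (x - r) ⟨hxr0, by linarith⟩
    rw [Real.dist_eq, Real.dist_eq] at this
    have h1 : z (x + r) - z (x - r) ≤ |z (x + r) - z (x - r)| := le_abs_self _
    have h2 : |x + r - (x - r)| = 2 * r := by rw [abs_of_nonneg (by linarith)]; ring
    rw [h2] at this
    linarith
  rw [setAverage_eq, hint, hval, Real.closedBall_eq_Icc, Real.volume_real_Icc_of_le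
    (by linarith)]
  have h2r : (0:ℝ) < 2 * r := by linarith
  have h2r' : (x + r - (x - r)) = 2 * r := by ring
  rw [h2r', smul_eq_mul, inv_mul_le_iff₀ h2r]
  exact hdist.trans_eq (by ring)

/-- **Example 3.5: occurrence of the Lavrentiev phenomenon in an autonomous scalar
problem with the single end point condition `z(1)=1`.** -/
theorem alberti_example_one_endpoint
    (y y' y'' : ℝ → ℝ) (hy : MemW11 y y')
    -- `y` is `C²` on `[0,1)` with first derivative `y'` and second derivative `y''`
    (hderiv : ∀ s ∈ Set.Ico (0:ℝ) 1, HasDerivAt y (y' s) s)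
    (hderiv2 : ∀ s ∈ Set.Ico (0:ℝ) 1, HasDerivAt y' (y'' s) s)
    (hcont2 : ContinuousOn y'' (Set.Ico (0:ℝ) 1))
    (hy0 : y 0 = 0) (hy1 : y 1 = 1)
    (hy'pos : ∀ s ∈ Set.Ico (0:ℝ) 1, 0 < y' s)
    (hy''pos : ∀ s ∈ Set.Ico (0:ℝ) 1, 0 < y'' s)
    (hy'top : Tendsto y' (nhdsWithin 1 (Set.Iio 1)) atTop)
    -- `q(ζ) = y'(y⁻¹(ζ))` for `ζ ∈ [0,1)`
    (q : ℝ → ℝ) (hq : ∀ s ∈ Set.Ico (0:ℝ) 1, q (y s) = y' s) :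
    -- `F(y) = 0`
    (∫⁻ s in Set.Icc (0:ℝ) 1, albertiLag2 q (y s) (y' s)) = 0 ∧
    -- while `F(z) = +∞` for every Lipschitz `z` with `z(1) = 1`
    ∀ z z' : ℝ → ℝ, MemW11 z z' →
      (∃ C : ℝ≥0, LipschitzOnWith C z (Set.Icc 0 1)) → z 1 = 1 →
      (∃ ε : ℝ, 0 < ε ∧ ε ≤ 1 ∧
        ∀ᵐ s ∂(volume.restrict (Set.Icc (1 - ε) 1)),
          z s ∉ Set.Ico (0:ℝ) 1 ∨ z' s < q (z s)) ∧
      (∫⁻ s in Set.Icc (0:ℝ) 1, albertiLag2 q (z s) (z' s)) = ⊤ := by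
  have hycont : ContinuousOn y (Set.Icc 0 1) := by
    have h1 : ContinuousOn (fun x => y 0 + ∫ s in (0:ℝ)..x, y' s) (Set.Icc (0:ℝ) 1) := by
      apply continuousOn_const.add
      have := intervalIntegral.continuousOn_primitive_interval' hy.1 Set.left_mem_uIcc
      rwa [Set.uIcc_of_le zero_le_one] at this
    exact h1.congr fun x hx => hy.2 x hx
  have hmono : StrictMonoOn y (Set.Icc 0 1) := by
    apply strictMonoOn_of_deriv_pos (convex_Icc 0 1) hycont
    intro x hx
    rw [interior_Icc] at hx
    rw [(hderiv x ⟨hx.1.le, hx.2⟩).deriv]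
    exact hy'pos x ⟨hx.1.le, hx.2⟩
  have hyIco : ∀ s ∈ Set.Ico (0:ℝ) 1, y s ∈ Set.Ico (0:ℝ) 1 := by
    intro s hs
    constructor
    · rcases eq_or_lt_of_le hs.1 with h | h
      · rw [← h, hy0]
      · rw [← hy0]
        exact (hmono (Set.left_mem_Icc.mpr zero_le_one) ⟨hs.1, hs.2.le⟩ h).le
    · rw [← hy1]
      exact hmono ⟨hs.1, hs.2.le⟩ (Set.right_mem_Icc.mpr zero_le_one) hs.2
  have hne1 : ∀ᵐ x : ℝ ∂volume, x ≠ (1:ℝ) := compl_mem_ae_iff.mpr (measure_singleton 1)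
  have hne0 : ∀ᵐ x : ℝ ∂volume, x ≠ (0:ℝ) := compl_mem_ae_iff.mpr (measure_singleton 0)
  constructor
  · have hae : (fun s => albertiLag2 q (y s) (y' s)) =ᵐ[volume.restrict (Set.Icc (0:ℝ) 1)]
        (fun _ => (0:ℝ≥0∞)) := by
      filter_upwards [ae_restrict_mem measurableSet_Icc, ae_restrict_of_ae hne1] with s hs hs1
      have hs' : s ∈ Set.Ico (0:ℝ) 1 := ⟨hs.1, lt_of_le_of_ne hs.2 hs1⟩
      rw [albertiLag2, if_pos ⟨hyIco s hs', (hq s hs').le⟩]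
    rw [lintegral_congr_ae hae, lintegral_zero]
  · intro z z' hz hlipE hz1
    obtain ⟨C, hlip⟩ := hlipE
    have hzd := deriv_le_of_lipschitz z z' hz C hlip
    have hev : {s : ℝ | (C:ℝ) + 1 ≤ y' s} ∈ nhdsWithin (1:ℝ) (Set.Iio 1) :=
      hy'top.eventually (eventually_ge_atTop ((C:ℝ) + 1))
    obtain ⟨l, hl, hIoo⟩ := mem_nhdsLT_iff_exists_Ioo_subset.mp hev
    set a : ℝ := max l 0 with ha
    have ha1 : a < 1 := max_lt hl zero_lt_one
    have haIcc : a ∈ Set.Icc (0:ℝ) 1 := ⟨le_max_right _ _, ha1.le⟩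
    have hya : y a < 1 := by
      rw [← hy1]; exact hmono haIcc (Set.right_mem_Icc.mpr zero_le_one) ha1
    set δ : ℝ := 1 - y a with hδ
    have hδpos : 0 < δ := by simp only [hδ]; linarith
    have hC1 : (0:ℝ) < (C:ℝ) + 1 := by positivity
    set ε : ℝ := min 1 (δ / ((C:ℝ) + 1)) with hε
    have hεpos : 0 < ε := lt_min one_pos (div_pos hδpos hC1)
    have hε1 : ε ≤ 1 := min_le_left _ _
    have hCε : (C:ℝ) * ε < δ := by
      calc (C:ℝ) * ε ≤ (C:ℝ) * (δ / ((C:ℝ) + 1)) :=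
            mul_le_mul_of_nonneg_left (min_le_right _ _) C.coe_nonneg
        _ < ((C:ℝ) + 1) * (δ / ((C:ℝ) + 1)) :=
            mul_lt_mul_of_pos_right (lt_add_one _) (div_pos hδpos hC1)
        _ = δ := by field_simp
    have hdisj : ∀ᵐ s ∂(volume.restrict (Set.Icc (1 - ε) 1)),
        z s ∉ Set.Ico (0:ℝ) 1 ∨ z' s < q (z s) := by
      filter_upwards [ae_restrict_mem measurableSet_Icc, ae_restrict_of_ae hzd,
        ae_restrict_of_ae hne0, ae_restrict_of_ae hne1] with s hs hsd hs0 hs1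
      have hs01 : s ∈ Set.Ioo (0:ℝ) 1 :=
        ⟨lt_of_le_of_ne (by linarith [hs.1]) (Ne.symm hs0), lt_of_le_of_ne hs.2 hs1⟩
      have hz's : z' s ≤ (C:ℝ) := hsd hs01
      by_cases hmem : z s ∈ Set.Ico (0:ℝ) 1
      · right
        have hsIcc : s ∈ Set.Icc (0:ℝ) 1 := ⟨hs01.1.le, hs01.2.le⟩
        have hd := hlip.dist_le_mul s hsIcc 1 (Set.right_mem_Icc.mpr zero_le_one)
        rw [Real.dist_eq, Real.dist_eq, hz1] at hd
        have h1 : |s - 1| ≤ ε := by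
          rw [abs_le]; constructor
          · linarith [hs.1]
          · linarith [hs01.2]
        have h3 : (C:ℝ) * |s - 1| ≤ (C:ℝ) * ε := mul_le_mul_of_nonneg_left h1 C.coe_nonneg
        have h4 : 1 - z s ≤ |z s - 1| := by rw [abs_sub_comm]; exact le_abs_self _
        have hzsa : y a < z s := by simp only [hδ] at hCε; linarith
        have hmemIcc : z s ∈ Set.Icc (y 0) (y 1) := by
          rw [hy0, hy1]; exact ⟨hmem.1, hmem.2.le⟩
        obtain ⟨t, htIcc, hyt⟩ := intermediate_value_Icc zero_le_one hycont hmemIcc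
        have ht1 : t < 1 := by
          rcases lt_or_eq_of_le htIcc.2 with h | h
          · exact h
          · exfalso; rw [h, hy1] at hyt; exact hmem.2.ne hyt.symm
        have hta : a < t := by
          by_contra h
          push_neg at h
          have := hmono.monotoneOn htIcc haIcc h
          rw [hyt] at this
          linarith
        have hy't : (C:ℝ) + 1 ≤ y' t :=
          hIoo ⟨lt_of_le_of_lt (le_max_left l 0) hta, ht1⟩
        have hqz : q (z s) = y' t := by rw [← hyt]; exact hq t ⟨htIcc.1, ht1⟩
        rw [hqz]
        linarith
      · exact Or.inl hmem
    refine ⟨⟨ε, hεpos, hε1, hdisj⟩, ?_⟩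
    have htop : (∫⁻ s in Set.Icc (1 - ε) 1, albertiLag2 q (z s) (z' s)) = ⊤ := by
      have hae : (fun s => albertiLag2 q (z s) (z' s))
          =ᵐ[volume.restrict (Set.Icc (1 - ε) 1)] (fun _ => (⊤ : ℝ≥0∞)) := by
        filter_upwards [hdisj] with s hs
        rw [albertiLag2, if_neg]
        rintro ⟨h1, h2⟩
        rcases hs with h | h
        · exact h h1
        · exact absurd h2 (not_le.mpr h)
      rw [lintegral_congr_ae hae, setLIntegral_const, Real.volume_Icc]
      have h2 : (1:ℝ) - (1 - ε) = ε := by ring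
      rw [h2, ENNReal.top_mul (ENNReal.ofReal_pos.mpr hεpos).ne']
    exact eq_top_iff.mpr (htop.symm.le.trans
      (lintegral_mono_set (Set.Icc_subset_Icc (by linarith) le_rfl)))
end
end
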